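/- arXiv:1406.0042 — 5 statements merged into one kernel-verified Lean document; each statement's English description precedes it below -/
import Mathlib

section
/- Let 0 < b ≤ ∞, and let I = (a,b) with |a| ≤ b, or I = [a,b) with −b ≤ a ≤ 0. Given f : I → ℝ, the following are equivalent: (1) f[A] ∈ P_2 for every A ∈ P_2(I); (2) f(√(xy))² ≤ f(x)f(y) for all x, y ∈ I ∩ [0,∞), and |f(x)| ≤ f(y) whenever x, y ∈ I with |x| ≤ y. In particular, if (1) holds, then either f ≡ 0 on I \ {−b}, or f(x) > 0 for all x ∈ I ∩ (0,∞); moreover f is continuous on I ∩ (0,∞). -/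
open Matrix Set

private lemma quad_of_psd {M : Matrix (Fin 2) (Fin 2) ℝ} (h : M.PosSemidef) (u v : ℝ) :
    0 ≤ M 0 0 * u^2 + (M 0 1 + M 1 0) * (u*v) + M 1 1 * v^2 := by
  have := h.dotProduct_mulVec_nonneg ![u, v]
  simp [dotProduct, Matrix.mulVec, Fin.sum_univ_two] at this
  nlinarith [this]

private lemma herm2 {M : Matrix (Fin 2) (Fin 2) ℝ} (h : M.IsHermitian) : M 1 0 = M 0 1 := by
  have := congrFun (congrFun h 0) 1
  simpa [Matrix.conjTranspose_apply] using this

private lemma psd2_elim {M : Matrix (Fin 2) (Fin 2) ℝ} (h : M.PosSemidef) :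
    0 ≤ M 0 0 ∧ 0 ≤ M 1 1 ∧ (M 0 1)^2 ≤ M 0 0 * M 1 1 := by
  have h10 := herm2 h.1
  have hq := fun u v => quad_of_psd h u v
  have h00 : 0 ≤ M 0 0 := by have := hq 1 0; nlinarith
  have h11 : 0 ≤ M 1 1 := by have := hq 0 1; nlinarith
  refine ⟨h00, h11, ?_⟩
  rcases lt_or_eq_of_le h00 with hα | hα
  · have := hq (M 0 1) (-(M 0 0)); rw [h10] at this; nlinarith
  · rcases lt_or_eq_of_le h11 with hγ | hγ
    · have := hq (-(M 1 1)) (M 0 1); rw [h10] at this; nlinarith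
    · have := hq (-(M 0 1)) 1; rw [h10] at this; nlinarith

private lemma psd2_intro {α β γ : ℝ} (hα : 0 ≤ α) (hγ : 0 ≤ γ) (hd : β^2 ≤ α*γ) :
    (!![α, β; β, γ]).PosSemidef := by
  rw [Matrix.posSemidef_iff_dotProduct_mulVec]
  constructor
  · ext i j; fin_cases i <;> fin_cases j <;> simp [Matrix.conjTranspose_apply]
  · intro x
    have he : star x ⬝ᵥ !![α, β; β, γ] *ᵥ x = α * (x 0)^2 + 2*β*(x 0 * x 1) + γ * (x 1)^2 := by
      simp [dotProduct, Matrix.mulVec, Fin.sum_univ_two]; ring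
    rw [he]
    rcases eq_or_lt_of_le hα with hα0 | hαp
    · have hβ : β = 0 := by nlinarith
      subst hβ; rw [← hα0]; nlinarith [mul_nonneg hγ (sq_nonneg (x 1))]
    · have hsub : 0 ≤ α*γ - β^2 := by linarith
      have key : 0 ≤ (α*(x 0) + β*(x 1))^2 + (α*γ - β^2)*(x 1)^2 :=
        add_nonneg (sq_nonneg _) (mul_nonneg hsub (sq_nonneg _))
      nlinarith [key]

private lemma sqrt_between {x y : ℝ} (hx : 0 ≤ x) (hxy : x ≤ y) :
    x ≤ Real.sqrt (x*y) ∧ Real.sqrt (x*y) ≤ y := by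
  constructor
  · calc x = Real.sqrt (x*x) := (Real.sqrt_mul_self hx).symm
    _ ≤ Real.sqrt (x*y) := Real.sqrt_le_sqrt (by nlinarith)
  · calc Real.sqrt (x*y) ≤ Real.sqrt (y*y) := Real.sqrt_le_sqrt (by nlinarith)
    _ = y := Real.sqrt_mul_self (hx.trans hxy)


private lemma sqrt_helper {c σ : ℝ} (hc : 0 < c) (hσ : 0 < σ) (e : ℝ) :
    Real.sqrt ((c * σ ^ (e:ℝ)) * c) = c * σ ^ (e/2 : ℝ) := by
  have key : (c * σ ^ (e/2 : ℝ))^2 = (c * σ ^ (e:ℝ)) * c := by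
    have h2 : σ ^ (e/2 : ℝ) * σ ^ (e/2 : ℝ) = σ ^ (e:ℝ) := by
      rw [← Real.rpow_add hσ, add_halves]
    calc (c * σ ^ (e/2:ℝ))^2 = c^2 * (σ ^ (e/2:ℝ) * σ ^ (e/2:ℝ)) := by ring
    _ = c^2 * σ ^ (e:ℝ) := by rw [h2]
    _ = (c * σ ^ (e:ℝ)) * c := by ring
  rw [← key, Real.sqrt_sq (by positivity)]

private lemma decay (F : ℝ) (U : ℕ → ℝ) (hF : 0 < F) (hUF : ∀ n, F ≤ U n)
    (hrec : ∀ n, U (n+1)^2 ≤ U n * F) : ∀ n, U n - F ≤ (U 0 - F)/2^n := by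
  intro n
  induction n with
  | zero => simp
  | succ n ih =>
    have h2n : (0:ℝ) < 2^n := by positivity
    have step : U (n+1) - F ≤ (U n - F)/2 := by
      nlinarith [hrec n, hUF (n+1), sq_nonneg (U (n+1) - F)]
    calc U (n+1) - F ≤ (U n - F)/2 := step
    _ ≤ ((U 0 - F)/2^n)/2 := by linarith
    _ = (U 0 - F)/2^(n+1) := by rw [pow_succ]; ring

private lemma cont_core {f : ℝ → ℝ} {I : Set ℝ}
    (hconv : ∀ x ∈ I, ∀ y ∈ I, ∀ z : ℝ, x ≤ z → z ≤ y → z ∈ I)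
    (h1 : ∀ x ∈ I, ∀ y ∈ I, 0 ≤ x → 0 ≤ y → f (Real.sqrt (x * y)) ^ 2 ≤ f x * f y)
    (hmono : ∀ x ∈ I, ∀ y ∈ I, 0 ≤ x → x ≤ y → f x ≤ f y)
    (hpos : ∀ x ∈ I, 0 < x → 0 < f x)
    {e c d : ℝ} (heI : e ∈ I) (hcI : c ∈ I) (hdI : d ∈ I)
    (he0 : 0 < e) (hec : e < c) (hcd : c < d) (hed : e ≤ c*c/d)
    {ε : ℝ} (hε : 0 < ε) :
    ∃ p q : ℝ, p ∈ I ∧ q ∈ I ∧ e ≤ p ∧ p < c ∧ c < q ∧ f q - f p < ε := by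
  have hc0 : 0 < c := lt_trans he0 hec
  have hd0 : 0 < d := lt_trans hc0 hcd
  have hσ1 : 1 < d / c := (one_lt_div hc0).mpr hcd
  have hσ0 : 0 < d / c := lt_trans one_pos hσ1
  set σ : ℝ := d / c with hσ_def
  have hcσ : c * σ = d := by rw [hσ_def]; field_simp
  have hcσ' : c * σ⁻¹ = c * c / d := by rw [hσ_def]; field_simp
  -- upper sequence bounds
  have hQmem : ∀ n : ℕ, c < c * σ ^ (((2:ℝ)⁻¹)^n : ℝ) ∧ c * σ ^ (((2:ℝ)⁻¹)^n : ℝ) ≤ d := by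
    intro n
    have he0n : (0:ℝ) < ((2:ℝ)⁻¹)^n := by positivity
    have he1n : ((2:ℝ)⁻¹)^n ≤ 1 := pow_le_one₀ (by norm_num) (by norm_num)
    have hgt : (1:ℝ) < σ ^ (((2:ℝ)⁻¹)^n : ℝ) := by
      calc (1:ℝ) = σ ^ (0:ℝ) := (Real.rpow_zero σ).symm
      _ < _ := Real.rpow_lt_rpow_of_exponent_lt hσ1 he0n
    have hle : σ ^ (((2:ℝ)⁻¹)^n : ℝ) ≤ σ := by
      have := Real.rpow_le_rpow_of_exponent_le hσ1.le he1n
      rwa [Real.rpow_one] at this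
    exact ⟨by nlinarith, by nlinarith⟩
  have hQI : ∀ n, c * σ ^ (((2:ℝ)⁻¹)^n : ℝ) ∈ I := fun n =>
    hconv c hcI d hdI _ (hQmem n).1.le (hQmem n).2
  have hQ0 : ∀ n, 0 < c * σ ^ (((2:ℝ)⁻¹)^n : ℝ) := fun n => lt_trans hc0 (hQmem n).1
  -- lower sequence bounds
  have hQ'mem : ∀ n : ℕ, e ≤ c * σ ^ (-(((2:ℝ)⁻¹)^n) : ℝ) ∧ c * σ ^ (-(((2:ℝ)⁻¹)^n) : ℝ) < c := by
    intro n
    have he0n : (0:ℝ) < ((2:ℝ)⁻¹)^n := by positivity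
    have he1n : ((2:ℝ)⁻¹)^n ≤ 1 := pow_le_one₀ (by norm_num) (by norm_num)
    have hlt : σ ^ (-(((2:ℝ)⁻¹)^n) : ℝ) < 1 := by
      calc σ ^ (-(((2:ℝ)⁻¹)^n) : ℝ) < σ ^ (0:ℝ) :=
        Real.rpow_lt_rpow_of_exponent_lt hσ1 (by linarith)
      _ = 1 := Real.rpow_zero σ
    have hge : σ⁻¹ ≤ σ ^ (-(((2:ℝ)⁻¹)^n) : ℝ) := by
      have := Real.rpow_le_rpow_of_exponent_le hσ1.le (show (-1:ℝ) ≤ -(((2:ℝ)⁻¹)^n) by linarith)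
      rwa [Real.rpow_neg_one] at this
    constructor
    · calc e ≤ c*c/d := hed
      _ = c * σ⁻¹ := hcσ'.symm
      _ ≤ _ := by nlinarith
    · nlinarith
  have hQ'I : ∀ n, c * σ ^ (-(((2:ℝ)⁻¹)^n) : ℝ) ∈ I := fun n =>
    hconv e heI c hcI _ (hQ'mem n).1 (hQ'mem n).2.le
  have hQ'0 : ∀ n, 0 < c * σ ^ (-(((2:ℝ)⁻¹)^n) : ℝ) := fun n =>
    lt_of_lt_of_le he0 (hQ'mem n).1
  have hF : 0 < f c := hpos c hcI hc0
  -- recursion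
  have hrec : ∀ n, f (c * σ ^ (((2:ℝ)⁻¹)^(n+1) : ℝ))^2 ≤ f (c * σ ^ (((2:ℝ)⁻¹)^n : ℝ)) * f c := by
    intro n
    have hexp : (((2:ℝ)⁻¹)^(n+1) : ℝ) = ((2:ℝ)⁻¹)^n / 2 := by rw [pow_succ]; ring
    have hsq : Real.sqrt ((c * σ ^ (((2:ℝ)⁻¹)^n : ℝ)) * c) = c * σ ^ (((2:ℝ)⁻¹)^(n+1) : ℝ) := by
      rw [hexp]; exact sqrt_helper hc0 hσ0 _
    have := h1 _ (hQI n) c hcI (hQ0 n).le hc0.le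
    rwa [hsq] at this
  have hUF : ∀ n, f c ≤ f (c * σ ^ (((2:ℝ)⁻¹)^n : ℝ)) := fun n =>
    hmono c hcI _ (hQI n) hc0.le (hQmem n).1.le
  have hdecay : ∀ n, f (c * σ ^ (((2:ℝ)⁻¹)^n : ℝ)) - f c ≤
      (f (c * σ ^ (((2:ℝ)⁻¹)^0 : ℝ)) - f c)/2^n :=
    decay (f c) (fun n => f (c * σ ^ (((2:ℝ)⁻¹)^n : ℝ))) hF hUF hrec
  -- key2 : lower gap dominated by upper gap
  have hkey2 : ∀ n, f c ^ 2 ≤ f (c * σ ^ (-(((2:ℝ)⁻¹)^n) : ℝ)) * f (c * σ ^ (((2:ℝ)⁻¹)^n : ℝ)) := by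
    intro n
    have hprod : (c * σ ^ (-(((2:ℝ)⁻¹)^n) : ℝ)) * (c * σ ^ (((2:ℝ)⁻¹)^n : ℝ)) = c * c := by
      rw [show (c * σ ^ (-(((2:ℝ)⁻¹)^n) : ℝ)) * (c * σ ^ (((2:ℝ)⁻¹)^n : ℝ))
          = c * c * (σ ^ (-(((2:ℝ)⁻¹)^n) : ℝ) * σ ^ (((2:ℝ)⁻¹)^n : ℝ)) from by ring,
        ← Real.rpow_add hσ0, neg_add_cancel, Real.rpow_zero, mul_one]
    have := h1 _ (hQ'I n) _ (hQI n) (hQ'0 n).le (hQ0 n).le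
    rwa [hprod, Real.sqrt_mul_self hc0.le] at this
  have hVc : ∀ n, f (c * σ ^ (-(((2:ℝ)⁻¹)^n) : ℝ)) ≤ f c := fun n =>
    hmono _ (hQ'I n) c hcI (hQ'0 n).le (hQ'mem n).2.le
  have hgapV : ∀ n, f c - f (c * σ ^ (-(((2:ℝ)⁻¹)^n) : ℝ)) ≤
      f (c * σ ^ (((2:ℝ)⁻¹)^n : ℝ)) - f c := by
    intro n
    nlinarith [hkey2 n, hpos _ (hQ'I n) (hQ'0 n), hUF n, hVc n,
      sq_nonneg (f (c * σ ^ (((2:ℝ)⁻¹)^n : ℝ)) - f (c * σ ^ (-(((2:ℝ)⁻¹)^n) : ℝ)))]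
  -- choose n
  have hG0 : 0 ≤ f (c * σ ^ (((2:ℝ)⁻¹)^0 : ℝ)) - f c := by linarith [hUF 0]
  obtain ⟨n, hn⟩ := pow_unbounded_of_one_lt
    (4 * (f (c * σ ^ (((2:ℝ)⁻¹)^0 : ℝ)) - f c) / ε) (by norm_num : (1:ℝ) < 2)
  have h2n : (0:ℝ) < 2^n := by positivity
  have hsmall : (f (c * σ ^ (((2:ℝ)⁻¹)^0 : ℝ)) - f c) / 2^n < ε / 2 := by
    rw [div_lt_iff₀ h2n]
    rw [div_lt_iff₀ hε] at hn
    nlinarith [mul_pos h2n hε, hG0]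
  refine ⟨c * σ ^ (-(((2:ℝ)⁻¹)^n) : ℝ), c * σ ^ (((2:ℝ)⁻¹)^n : ℝ),
    hQ'I n, hQI n, (hQ'mem n).1, (hQ'mem n).2, (hQmem n).1, ?_⟩
  have hu := hdecay n
  have hv := hgapV n
  linarith

private lemma seq_zero (C : ℝ) (g : ℕ → ℝ) (h0 : g 0 = 0) (hge : ∀ n, 0 ≤ g n)
    (hrec : ∀ n, g (n+1)^2 ≤ g n * C) : ∀ n, g n = 0 := by
  intro n
  induction n with
  | zero => exact h0
  | succ n ih =>
    have := hrec n
    rw [ih, zero_mul] at this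
    nlinarith [hge (n+1)]

private lemma exists_rpow_big {r ρ : ℝ} (hr0 : 0 < r) (hr1 : r < 1) (hρ0 : 0 < ρ)
    (hρ1 : ρ < 1) : ∃ n : ℕ, ρ < r ^ (((2:ℝ)⁻¹)^n : ℝ) := by
  have hlogr : Real.log r < 0 := Real.log_neg hr0 hr1
  have hlogρ : Real.log ρ < 0 := Real.log_neg hρ0 hρ1
  obtain ⟨n, hn⟩ := exists_pow_lt_of_lt_one (div_pos_of_neg_of_neg hlogρ hlogr)
    (by norm_num : (2:ℝ)⁻¹ < 1)
  refine ⟨n, ?_⟩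
  have hδeq : Real.log ρ / Real.log r * Real.log r = Real.log ρ :=
    div_mul_cancel₀ _ (ne_of_lt hlogr)
  have hprod : Real.log ρ < ((2:ℝ)⁻¹)^n * Real.log r := by
    nlinarith [mul_pos (sub_pos.mpr hn) (neg_pos.mpr hlogr)]
  calc ρ = Real.exp (Real.log ρ) := (Real.exp_log hρ0).symm
  _ < Real.exp (Real.log r * (((2:ℝ)⁻¹)^n)) :=
      Real.exp_lt_exp.mpr (by rw [mul_comm]; exact hprod)
  _ = r ^ (((2:ℝ)⁻¹)^n : ℝ) := (Real.rpow_def_of_pos hr0 _).symm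


private lemma zero_up {f : ℝ → ℝ} {I : Set ℝ}
    (hconv : ∀ x ∈ I, ∀ y ∈ I, ∀ z : ℝ, x ≤ z → z ≤ y → z ∈ I)
    (h1 : ∀ x ∈ I, ∀ y ∈ I, 0 ≤ x → 0 ≤ y → f (Real.sqrt (x * y)) ^ 2 ≤ f x * f y)
    (hnonneg : ∀ x ∈ I, 0 ≤ x → 0 ≤ f x)
    {x₀ t t' : ℝ} (hx₀I : x₀ ∈ I) (ht'I : t' ∈ I)
    (hx₀0 : 0 < x₀) (hfx₀ : f x₀ = 0) (hx₀t' : x₀ < t') (htt' : t < t') (ht0 : 0 < t) :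
    ∃ s ∈ I, t ≤ s ∧ f s = 0 := by
  have ht'0 : 0 < t' := lt_trans hx₀0 hx₀t'
  have hr0 : 0 < x₀ / t' := div_pos hx₀0 ht'0
  have hr1 : x₀ / t' < 1 := (div_lt_one ht'0).mpr hx₀t'
  set r : ℝ := x₀ / t' with hr_def
  -- membership of the sequence points
  have hmem : ∀ n : ℕ, x₀ ≤ t' * r ^ (((2:ℝ)⁻¹)^n : ℝ) ∧ t' * r ^ (((2:ℝ)⁻¹)^n : ℝ) ≤ t' := by
    intro n
    have he0 : (0:ℝ) < ((2:ℝ)⁻¹)^n := by positivity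
    have he1 : ((2:ℝ)⁻¹)^n ≤ 1 := pow_le_one₀ (by norm_num) (by norm_num)
    have hlow : r ^ (1:ℝ) ≤ r ^ (((2:ℝ)⁻¹)^n : ℝ) :=
      Real.rpow_le_rpow_of_exponent_ge hr0 hr1.le he1
    rw [Real.rpow_one] at hlow
    have hhigh : r ^ (((2:ℝ)⁻¹)^n : ℝ) ≤ 1 := Real.rpow_le_one hr0.le hr1.le he0.le
    constructor
    · have : x₀ = t' * r := by rw [hr_def]; field_simp
      nlinarith
    · nlinarith
  have hsI : ∀ n, t' * r ^ (((2:ℝ)⁻¹)^n : ℝ) ∈ I := fun n =>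
    hconv x₀ hx₀I t' ht'I _ (hmem n).1 (hmem n).2
  have hs0 : ∀ n, 0 < t' * r ^ (((2:ℝ)⁻¹)^n : ℝ) := fun n => lt_of_lt_of_le hx₀0 (hmem n).1
  -- all sequence values vanish
  have hrec : ∀ n, f (t' * r ^ (((2:ℝ)⁻¹)^(n+1) : ℝ))^2 ≤ f (t' * r ^ (((2:ℝ)⁻¹)^n : ℝ)) * f t' := by
    intro n
    have hexp : (((2:ℝ)⁻¹)^(n+1) : ℝ) = ((2:ℝ)⁻¹)^n / 2 := by rw [pow_succ]; ring
    have hsq : Real.sqrt ((t' * r ^ (((2:ℝ)⁻¹)^n : ℝ)) * t') = t' * r ^ (((2:ℝ)⁻¹)^(n+1) : ℝ) := by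
      rw [hexp]
      exact sqrt_helper ht'0 hr0 _
    have := h1 _ (hsI n) t' ht'I (hs0 n).le ht'0.le
    rwa [hsq] at this
  have hbase : f (t' * r ^ (((2:ℝ)⁻¹)^0 : ℝ)) = 0 := by
    rw [pow_zero, Real.rpow_one, hr_def]
    rw [show t' * (x₀ / t') = x₀ from by field_simp]
    exact hfx₀
  have hzero : ∀ n, f (t' * r ^ (((2:ℝ)⁻¹)^n : ℝ)) = 0 :=
    seq_zero (f t') (fun n => f (t' * r ^ (((2:ℝ)⁻¹)^n : ℝ))) hbase
      (fun n => hnonneg _ (hsI n) (hs0 n).le) hrec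
  -- find a sequence point above t
  obtain ⟨n, hn⟩ := exists_rpow_big hr0 hr1 (div_pos ht0 ht'0) ((div_lt_one ht'0).mpr htt')
  refine ⟨t' * r ^ (((2:ℝ)⁻¹)^n : ℝ), hsI n, ?_, hzero n⟩
  have : t = t' * (t / t') := by field_simp
  nlinarith [hn, ht'0]
/-- **Vasudeva-type characterization in the 2 × 2 case.** Let `0 < b ≤ ∞` and `I = (a,b)`
with `|a| ≤ b`, or `I = [a,b)` with `-b ≤ a ≤ 0`.  Then `f[A]` is positive semidefinite
for every `2 × 2` positive semidefinite `A` with entries in `I` iff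
`f(√(xy))² ≤ f(x)f(y)` for all `x,y ∈ I ∩ [0,∞)` and `|f(x)| ≤ f(y)` whenever
`|x| ≤ y` in `I`.  In particular, if the former holds then either `f ≡ 0` on `I \ {-b}`
or `f > 0` on `I ∩ (0,∞)`, and `f` is continuous on `I ∩ (0,∞)`. -/
theorem psd_preserver_two_by_two
    (a : ℝ) (b : EReal) (hb : 0 < b) (I : Set ℝ)
    (hI : (I = {x : ℝ | a < x ∧ (x : EReal) < b} ∧ ((|a| : ℝ) : EReal) ≤ b) ∨
          (I = {x : ℝ | a ≤ x ∧ (x : EReal) < b} ∧ -b ≤ (a : EReal) ∧ a ≤ 0))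
    (f : ℝ → ℝ) :
    ((∀ A : Matrix (Fin 2) (Fin 2) ℝ, A.PosSemidef → (∀ i j, A i j ∈ I) →
        (A.map f).PosSemidef) ↔
      ((∀ x ∈ I, ∀ y ∈ I, 0 ≤ x → 0 ≤ y → f (Real.sqrt (x * y)) ^ 2 ≤ f x * f y) ∧
       (∀ x ∈ I, ∀ y ∈ I, |x| ≤ y → |f x| ≤ f y))) ∧
    ((∀ A : Matrix (Fin 2) (Fin 2) ℝ, A.PosSemidef → (∀ i j, A i j ∈ I) →
        (A.map f).PosSemidef) →
      (((∀ x ∈ I, (x : EReal) ≠ -b → f x = 0) ∨ (∀ x ∈ I, 0 < x → 0 < f x)) ∧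
        ContinuousOn f (I ∩ Set.Ioi 0))) := by
  -- basic structural facts about I
  have hconv : ∀ x ∈ I, ∀ y ∈ I, ∀ z : ℝ, x ≤ z → z ≤ y → z ∈ I := by
    rcases hI with ⟨hIe, -⟩ | ⟨hIe, -⟩ <;> subst hIe <;>
      exact fun x hx y hy z h1 h2 =>
        ⟨by first | exact lt_of_lt_of_le hx.1 h1 | exact le_trans hx.1 h1,
          lt_of_le_of_lt (EReal.coe_le_coe_iff.mpr h2) hy.2⟩
  have hltb : ∀ x ∈ I, (x : EReal) < b := by
    rcases hI with ⟨hIe, -⟩ | ⟨hIe, -⟩ <;> subst hIe <;> exact fun x hx => hx.2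
  have hup : ∀ t ∈ I, ∃ t' ∈ I, t < t' := by
    intro t ht
    obtain ⟨z, hz1, hz2⟩ := exists_between (hltb t ht)
    lift z to ℝ using ⟨ne_top_of_lt hz2, ne_bot_of_gt hz1⟩
    have htz : t < z := EReal.coe_lt_coe_iff.mp hz1
    refine ⟨z, ?_, htz⟩
    rcases hI with ⟨hIe, -⟩ | ⟨hIe, -⟩ <;> rw [hIe]
    · exact ⟨lt_trans (hIe ▸ ht).1 htz, hz2⟩
    · exact ⟨le_trans (hIe ▸ ht).1 htz.le, hz2⟩
  have hsqrtI : ∀ x ∈ I, ∀ y ∈ I, 0 ≤ x → 0 ≤ y → Real.sqrt (x*y) ∈ I := by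
    intro x hx y hy hx0 hy0
    rcases le_total x y with h | h
    · obtain ⟨h1, h2⟩ := sqrt_between hx0 h
      exact hconv x hx y hy _ h1 h2
    · obtain ⟨h1, h2⟩ := sqrt_between hy0 h
      rw [mul_comm] at h1 h2
      exact hconv y hy x hx _ h1 h2
  -- the equivalence
  have hmain : (∀ A : Matrix (Fin 2) (Fin 2) ℝ, A.PosSemidef → (∀ i j, A i j ∈ I) →
        (A.map f).PosSemidef) ↔
      ((∀ x ∈ I, ∀ y ∈ I, 0 ≤ x → 0 ≤ y → f (Real.sqrt (x * y)) ^ 2 ≤ f x * f y) ∧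
       (∀ x ∈ I, ∀ y ∈ I, |x| ≤ y → |f x| ≤ f y)) := by
    constructor
    · intro h
      constructor
      · intro x hx y hy hx0 hy0
        set s := Real.sqrt (x*y) with hs
        have hsI := hsqrtI x hx y hy hx0 hy0
        have hA := h !![x, s; s, y]
          (psd2_intro hx0 hy0 (le_of_eq (Real.sq_sqrt (mul_nonneg hx0 hy0))))
          (by intro i j; fin_cases i <;> fin_cases j <;> simpa using ‹_›)
        obtain ⟨-, -, hd⟩ := psd2_elim hA
        simpa [Matrix.map_apply, mul_comm] using hd
      · intro x hx y hy hxy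
        have hy0 : 0 ≤ y := (abs_nonneg x).trans hxy
        have hA := h !![y, x; x, y]
          (psd2_intro hy0 hy0 (by nlinarith [sq_abs x, abs_nonneg x]))
          (by intro i j; fin_cases i <;> fin_cases j <;> simpa using ‹_›)
        obtain ⟨hfy0, -, hd⟩ := psd2_elim hA
        simp [Matrix.map_apply] at hfy0 hd
        rw [abs_le]
        constructor <;> nlinarith [hd, hfy0]
    · rintro ⟨h1, h2⟩ A hA hAI
      obtain ⟨h00, h11, hdet⟩ := psd2_elim hA
      have h10 := herm2 hA.1
      have hpI := hAI 0 0; have hqI := hAI 0 1; have hrI := hAI 1 1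
      have hfp : 0 ≤ f (A 0 0) :=
        le_trans (abs_nonneg _) (h2 _ hpI _ hpI (le_of_eq (abs_of_nonneg h00)))
      have hfr : 0 ≤ f (A 1 1) :=
        le_trans (abs_nonneg _) (h2 _ hrI _ hrI (le_of_eq (abs_of_nonneg h11)))
      have hsI := hsqrtI _ hpI _ hrI h00 h11
      have habs : |A 0 1| ≤ Real.sqrt (A 0 0 * A 1 1) := by
        rw [← Real.sqrt_sq_eq_abs]
        exact Real.sqrt_le_sqrt hdet
      have hfq : |f (A 0 1)| ≤ f (Real.sqrt (A 0 0 * A 1 1)) := h2 _ hqI _ hsI habs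
      have hfs2 := h1 _ hpI _ hrI h00 h11
      have hq2 : (f (A 0 1))^2 ≤ f (A 0 0) * f (A 1 1) := by
        calc (f (A 0 1))^2 = |f (A 0 1)|^2 := (sq_abs _).symm
        _ ≤ f (Real.sqrt (A 0 0 * A 1 1))^2 := by
            apply pow_le_pow_left₀ (abs_nonneg _) hfq
        _ ≤ _ := hfs2
      have hmap : A.map f = !![f (A 0 0), f (A 0 1); f (A 0 1), f (A 1 1)] := by
        ext i j; fin_cases i <;> fin_cases j <;> simp [Matrix.map_apply, h10]
      rw [hmap]
      exact psd2_intro hfp hfr hq2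
  refine ⟨hmain, ?_⟩
  intro hpres
  obtain ⟨h1, h2⟩ := hmain.mp hpres
  have hnonneg : ∀ x ∈ I, 0 ≤ x → 0 ≤ f x := fun x hx hx0 =>
    le_trans (abs_nonneg _) (h2 x hx x hx (le_of_eq (abs_of_nonneg hx0)))
  have hmono : ∀ x ∈ I, ∀ y ∈ I, 0 ≤ x → x ≤ y → f x ≤ f y := by
    intro x hx y hy hx0 hxy
    exact le_trans (le_abs_self _) (h2 x hx y hy (by rwa [abs_of_nonneg hx0]))
  by_cases hpos : ∀ x ∈ I, 0 < x → 0 < f x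
  · -- positive case : continuity via the quantitative argument
    refine ⟨Or.inr hpos, ?_⟩
    intro c hcS
    obtain ⟨hcI, hc0'⟩ := hcS
    have hc0 : (0:ℝ) < c := hc0'
    -- a point e ∈ I with max a 0 < e < c
    have hac : a < c := by
      rcases hI with ⟨hIe, -⟩ | ⟨hIe, -, ha0⟩
      · exact (hIe ▸ hcI).1
      · exact lt_of_le_of_lt ha0 hc0
    have hmaxc : max a 0 < c := max_lt hac hc0
    have he1 : max a 0 < (max a 0 + c) / 2 := by linarith
    have he2 : (max a 0 + c) / 2 < c := by linarith
    have he0 : 0 < (max a 0 + c) / 2 := lt_of_le_of_lt (le_max_right a 0) he1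
    have heI : (max a 0 + c) / 2 ∈ I := by
      have heb : (((max a 0 + c) / 2 : ℝ) : EReal) < b :=
        lt_trans (EReal.coe_lt_coe_iff.mpr he2) (hltb c hcI)
      rcases hI with ⟨hIe, -⟩ | ⟨hIe, -⟩ <;> rw [hIe]
      · exact ⟨lt_of_le_of_lt (le_max_left a 0) he1, heb⟩
      · exact ⟨le_of_lt (lt_of_le_of_lt (le_max_left a 0) he1), heb⟩
    -- a point d ∈ I with c < d ≤ c*c/e
    obtain ⟨d', hd'I, hcd'⟩ := hup c hcI
    have hccd : c < c*c/((max a 0 + c) / 2) := by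
      rw [lt_div_iff₀ he0]; nlinarith
    have hcd : c < min d' (c*c/((max a 0 + c) / 2)) := lt_min hcd' hccd
    have hdI : min d' (c*c/((max a 0 + c) / 2)) ∈ I :=
      hconv c hcI d' hd'I _ (le_of_lt hcd) (min_le_left _ _)
    have hd0 : 0 < min d' (c*c/((max a 0 + c) / 2)) := lt_trans hc0 hcd
    have hed : (max a 0 + c) / 2 ≤ c*c/(min d' (c*c/((max a 0 + c) / 2))) := by
      rw [le_div_iff₀ hd0]
      calc (max a 0 + c) / 2 * min d' (c*c/((max a 0 + c) / 2))
          ≤ (max a 0 + c) / 2 * (c*c/((max a 0 + c) / 2)) := by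
            apply mul_le_mul_of_nonneg_left (min_le_right _ _) he0.le
      _ = c * c := by field_simp
    -- conclude continuity within the set at c
    rw [Metric.continuousWithinAt_iff]
    intro ε hε
    obtain ⟨p, q, hpI, hqI, hep, hpc, hcq, hgap⟩ :=
      cont_core hconv h1 hmono hpos heI hcI hdI he0 he2 hcd hed hε
    refine ⟨min (c - p) (q - c), lt_min (by linarith) (by linarith), ?_⟩
    intro x hxS hxd
    obtain ⟨hxI, hx0'⟩ := hxS
    have hx0 : (0:ℝ) < x := hx0'
    rw [Real.dist_eq] at hxd
    have ha1 := (abs_lt.mp hxd).1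
    have ha2 := (abs_lt.mp hxd).2
    have hmin1 := min_le_left (c - p) (q - c)
    have hmin2 := min_le_right (c - p) (q - c)
    have hxq : x < q := by linarith
    have hpx : p < x := by linarith
    have hp0 : 0 < p := lt_of_lt_of_le he0 hep
    have hfx1 : f x ≤ f q := hmono x hxI q hqI hx0.le hxq.le
    have hfx2 : f p ≤ f x := hmono p hpI x hxI hp0.le hpx.le
    have hfc1 : f c ≤ f q := hmono c hcI q hqI hc0.le hcq.le
    have hfc2 : f p ≤ f c := hmono p hpI c hcI hp0.le hpc.le
    rw [Real.dist_eq, abs_lt]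
    constructor <;> linarith
  · -- zero case
    push_neg at hpos
    obtain ⟨x₀, hx₀I, hx₀0, hfx₀le⟩ := hpos
    have hfx₀ : f x₀ = 0 := le_antisymm hfx₀le (hnonneg x₀ hx₀I hx₀0.le)
    -- f vanishes on all nonnegative points of I
    have hzero : ∀ t ∈ I, 0 ≤ t → f t = 0 := by
      intro t ht ht0
      have hex : ∃ s ∈ I, t ≤ s ∧ f s = 0 := by
        rcases le_total t x₀ with h | h
        · exact ⟨x₀, hx₀I, h, hfx₀⟩
        · obtain ⟨t', ht'I, htt'⟩ := hup t ht
          exact zero_up hconv h1 hnonneg hx₀I ht'I hx₀0 hfx₀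
            (lt_of_le_of_lt h htt') htt' (lt_of_lt_of_le hx₀0 h)
      obtain ⟨s, hsI, hts, hfs⟩ := hex
      have habs : |f t| ≤ f s := h2 t ht s hsI (by rwa [abs_of_nonneg ht0])
      rw [hfs] at habs
      exact abs_eq_zero.mp (le_antisymm habs (abs_nonneg _))
    constructor
    · left
      intro x hxI hxb
      rcases le_or_gt 0 x with hx0 | hx0
      · exact hzero x hxI hx0
      · -- x < 0 : -x ∈ I and f vanishes there
        have hnegI : -x ∈ I := by
          rcases hI with ⟨hIe, habs⟩ | ⟨hIe, hba, ha0⟩ <;> rw [hIe]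
          · have hx := hIe ▸ hxI
            have ha : a < 0 := lt_trans hx.1 hx0
            refine ⟨by linarith [hx.1], ?_⟩
            calc ((-x:ℝ) : EReal) < ((-a:ℝ) : EReal) :=
                EReal.coe_lt_coe_iff.mpr (by linarith [hx.1])
            _ = ((|a|:ℝ) : EReal) := by rw [abs_of_neg ha]
            _ ≤ b := habs
          · have hx := hIe ▸ hxI
            refine ⟨by linarith [hx.1], ?_⟩
            have hxgt : -b < (x : EReal) :=
              lt_of_le_of_ne (le_trans hba (EReal.coe_le_coe_iff.mpr hx.1))
                (fun hcon => hxb hcon.symm)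
            rw [EReal.coe_neg]
            exact EReal.neg_lt_comm.mp hxgt
        have hf0 : f (-x) = 0 := hzero (-x) hnegI (by linarith)
        have habs : |f x| ≤ f (-x) := h2 x hxI (-x) hnegI (by rw [abs_of_neg hx0])
        rw [hf0] at habs
        exact abs_eq_zero.mp (le_antisymm habs (abs_nonneg _))
    · apply ContinuousOn.congr continuousOn_const
      intro x hx
      exact hzero x hx.1 (le_of_lt hx.2)
end

section
/- Let 0 < b ≤ ∞, and let I = (a,b) with |a| ≤ b, or I = [a,b) with |a| < b. Let f : I → ℝ. Then: (1) f[A] ∈ S_2^1 for every A ∈ P_2^1(I) if and only if for all x, y ∈ I ∩ [0,∞) and each choice of sign, whenever ±√(xy) ∈ I one has f(±√(xy))² = f(x)f(y). (2) Suppose 0 ∈ I, f(p) = 0 for some p ∈ I with p ≠ 0, and f[A] ∈ S_n^1 for every A ∈ P_n^1(I), for some n ≥ 2. Then f ≡ 0 on I. -/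
open Matrix Set

private lemma outer_psd_rank {n : ℕ} (w : Fin n → ℝ) :
    (Matrix.of fun i j => w i * w j : Matrix (Fin n) (Fin n) ℝ).PosSemidef ∧
    (Matrix.of fun i j => w i * w j : Matrix (Fin n) (Fin n) ℝ).rank ≤ 1 := by
  set B : Matrix (Fin n) (Fin 1) ℝ := Matrix.of fun i _ => w i with hB
  have hBB : (Matrix.of fun i j => w i * w j : Matrix (Fin n) (Fin n) ℝ) = B * Bᴴ := by
    ext i j
    simp [hB, Matrix.mul_apply, Matrix.conjTranspose_apply, Fin.sum_univ_one]
  constructor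
  · rw [hBB]; exact Matrix.posSemidef_self_mul_conjTranspose B
  · rw [hBB]
    exact le_trans (Matrix.rank_mul_le_left B Bᴴ)
      (le_trans (Matrix.rank_le_card_width B) (by simp))

private lemma matrix_minor {n : ℕ} (M : Matrix (Fin n) (Fin n) ℝ) (h : M.rank ≤ 1)
    (i j k l : Fin n) : M i k * M j l = M i l * M j k := by
  classical
  rw [Matrix.rank] at h
  obtain ⟨v, hv⟩ := finrank_le_one_iff.mp h
  obtain ⟨c, hc⟩ := hv ⟨M *ᵥ Pi.single k 1, ⟨Pi.single k 1, M.mulVecLin_apply _⟩⟩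
  obtain ⟨d, hd⟩ := hv ⟨M *ᵥ Pi.single l 1, ⟨Pi.single l 1, M.mulVecLin_apply _⟩⟩
  have hck : ∀ r, c * (v : Fin n → ℝ) r = M r k := by
    intro r
    have := congrArg (fun u : LinearMap.range M.mulVecLin => (u : Fin n → ℝ) r) hc
    simpa using this
  have hdl : ∀ r, d * (v : Fin n → ℝ) r = M r l := by
    intro r
    have := congrArg (fun u : LinearMap.range M.mulVecLin => (u : Fin n → ℝ) r) hd
    simpa using this
  rw [← hck i, ← hck j, ← hdl i, ← hdl j]
  ring

private lemma rank_le_one_of_det_eq_zero (M : Matrix (Fin 2) (Fin 2) ℝ) (h : M.det = 0) :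
    M.rank ≤ 1 := by
  obtain ⟨v, hv, hMv⟩ := Matrix.exists_mulVec_eq_zero_iff.mpr h
  have hker : 0 < Module.finrank ℝ (LinearMap.ker M.mulVecLin) :=
    Module.finrank_pos_iff_exists_ne_zero.mpr
      ⟨⟨v, by simpa [LinearMap.mem_ker] using hMv⟩, by simpa [Subtype.ext_iff] using hv⟩
  have hrn := LinearMap.finrank_range_add_finrank_ker M.mulVecLin
  have h2 : Module.finrank ℝ (Fin 2 → ℝ) = 2 := Module.finrank_fin_fun ℝ
  rw [h2] at hrn
  rw [Matrix.rank]
  omega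

private lemma exists_outer (x y s : ℝ) (hx : 0 ≤ x) (hy : 0 ≤ y) (hs : s ^ 2 = x * y) :
    ∃ w : Fin 2 → ℝ, w 0 * w 0 = x ∧ w 0 * w 1 = s ∧ w 1 * w 1 = y := by
  by_cases hx' : x = 0
  · have hs0 : s = 0 := by
      have h0 : s ^ 2 = 0 := by rw [hs, hx', zero_mul]
      exact pow_eq_zero_iff (two_ne_zero) |>.mp h0
    exact ⟨![0, Real.sqrt y], by simp [hx'], by simp [hs0], Real.mul_self_sqrt hy⟩
  · have hxpos : 0 < x := lt_of_le_of_ne hx (Ne.symm hx')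
    have hsx : Real.sqrt x ≠ 0 := ne_of_gt (Real.sqrt_pos.2 hxpos)
    refine ⟨![Real.sqrt x, s / Real.sqrt x], Real.mul_self_sqrt hx, ?_, ?_⟩
    · show Real.sqrt x * (s / Real.sqrt x) = s
      rw [mul_comm, div_mul_cancel₀ _ hsx]
    · show s / Real.sqrt x * (s / Real.sqrt x) = y
      rw [div_mul_div_comm, Real.mul_self_sqrt hx, ← sq, hs, mul_comm, mul_div_assoc,
        div_self hx', mul_one]

private lemma aux_key (n : ℕ) (hn : 2 ≤ n) (I : Set ℝ) (f : ℝ → ℝ)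
    (h02 : n = 2 ∨ (0 : ℝ) ∈ I)
    (H : ∀ A : Matrix (Fin n) (Fin n) ℝ, A.PosSemidef → A.rank ≤ 1 → (∀ i j, A i j ∈ I) →
        (A.map f).IsSymm ∧ (A.map f).rank ≤ 1)
    {x y s : ℝ} (hx : x ∈ I) (hy : y ∈ I) (hs : s ∈ I) (hx0 : 0 ≤ x) (hy0 : 0 ≤ y)
    (hsq : s ^ 2 = x * y) : f s ^ 2 = f x * f y := by
  classical
  obtain ⟨w2, hw00, hw01, hw11⟩ := exists_outer x y s hx0 hy0 hsq
  set i0 : Fin n := ⟨0, by omega⟩ with hi0def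
  set i1 : Fin n := ⟨1, by omega⟩ with hi1def
  have hne : i0 ≠ i1 := by simp [hi0def, hi1def, Fin.ext_iff]
  set w : Fin n → ℝ := fun i => if i = i0 then w2 0 else if i = i1 then w2 1 else 0 with hw
  set A : Matrix (Fin n) (Fin n) ℝ := Matrix.of fun i j => w i * w j with hA
  have hps := outer_psd_rank w
  have hwi0 : w i0 = w2 0 := by simp [hw]
  have hwi1 : w i1 = w2 1 := by simp [hw, hne.symm]
  have hwelse : ∀ i : Fin n, i ≠ i0 → i ≠ i1 → w i = 0 := by
    intro i h1 h2; simp [hw, h1, h2]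
  have h0I : (∃ i : Fin n, i ≠ i0 ∧ i ≠ i1) → (0 : ℝ) ∈ I := by
    rintro ⟨i, h1, h2⟩
    refine h02.resolve_left fun h2' => ?_
    subst h2'
    have hlt := i.isLt
    simp only [Ne, Fin.ext_iff, hi0def, hi1def] at h1 h2
    omega
  have hmem : ∀ i j, A i j ∈ I := by
    intro i j
    by_cases hi0' : i = i0
    · by_cases hj0' : j = i0
      · have : A i j = x := by rw [hA, hi0', hj0']; show w i0 * w i0 = x; rw [hwi0, hw00]
        rw [this]; exact hx
      · by_cases hj1' : j = i1
        · have : A i j = s := by rw [hA, hi0', hj1']; show w i0 * w i1 = s; rw [hwi0, hwi1, hw01]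
          rw [this]; exact hs
        · have : A i j = 0 := by
            rw [hA]; show w i * w j = 0; rw [hwelse j hj0' hj1', mul_zero]
          rw [this]; exact h0I ⟨j, hj0', hj1'⟩
    · by_cases hi1' : i = i1
      · by_cases hj0' : j = i0
        · have : A i j = s := by
            rw [hA, hi1', hj0']; show w i1 * w i0 = s; rw [hwi0, hwi1, mul_comm, hw01]
          rw [this]; exact hs
        · by_cases hj1' : j = i1
          · have : A i j = y := by rw [hA, hi1', hj1']; show w i1 * w i1 = y; rw [hwi1, hw11]
            rw [this]; exact hy
          · have : A i j = 0 := by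
              rw [hA]; show w i * w j = 0; rw [hwelse j hj0' hj1', mul_zero]
            rw [this]; exact h0I ⟨j, hj0', hj1'⟩
      · have : A i j = 0 := by
          rw [hA]; show w i * w j = 0; rw [hwelse i hi0' hi1', zero_mul]
        rw [this]; exact h0I ⟨i, hi0', hi1'⟩
  obtain ⟨-, hrk⟩ := H A hps.1 hps.2 hmem
  have hm := matrix_minor (A.map f) hrk i0 i1 i0 i1
  have e00 : A i0 i0 = x := by rw [hA]; show w i0 * w i0 = x; rw [hwi0, hw00]
  have e01 : A i0 i1 = s := by rw [hA]; show w i0 * w i1 = s; rw [hwi0, hwi1, hw01]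
  have e10 : A i1 i0 = s := by rw [hA]; show w i1 * w i0 = s; rw [hwi0, hwi1, mul_comm, hw01]
  have e11 : A i1 i1 = y := by rw [hA]; show w i1 * w i1 = y; rw [hwi1, hw11]
  simp only [Matrix.map_apply, e00, e01, e10, e11] at hm
  rw [sq]
  exact hm.symm

/-- Let `0 < b ≤ ∞` and `I = (a,b)` with `|a| ≤ b`, or `I = [a,b)` with `|a| < b`.
(1) `f[A]` is symmetric of rank at most `1` for every `A ∈ P_2^1(I)` iff
`f(±√(xy))² = f(x)f(y)` for all `x,y ∈ I ∩ [0,∞)` whenever `±√(xy) ∈ I`.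
(2) If `0 ∈ I`, `f(p) = 0` for some `0 ≠ p ∈ I`, and `f[-]` maps `P_n^1(I)` into
`S_n^1` for some `n ≥ 2`, then `f ≡ 0` on `I`. -/
theorem rank_one_two_by_two_functional_equation
    (a : ℝ) (b : EReal) (hb : 0 < b) (I : Set ℝ)
    (hI : (I = {x : ℝ | a < x ∧ (x : EReal) < b} ∧ ((|a| : ℝ) : EReal) ≤ b) ∨
          (I = {x : ℝ | a ≤ x ∧ (x : EReal) < b} ∧ ((|a| : ℝ) : EReal) < b))
    (f : ℝ → ℝ) :
    ((∀ A : Matrix (Fin 2) (Fin 2) ℝ, A.PosSemidef → A.rank ≤ 1 → (∀ i j, A i j ∈ I) →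
        (A.map f).IsSymm ∧ (A.map f).rank ≤ 1) ↔
      (∀ x ∈ I, ∀ y ∈ I, 0 ≤ x → 0 ≤ y →
        (Real.sqrt (x * y) ∈ I → f (Real.sqrt (x * y)) ^ 2 = f x * f y) ∧
        (-Real.sqrt (x * y) ∈ I → f (-Real.sqrt (x * y)) ^ 2 = f x * f y))) ∧
    (∀ n : ℕ, 2 ≤ n → (0 : ℝ) ∈ I → ∀ p ∈ I, p ≠ 0 → f p = 0 →
      (∀ A : Matrix (Fin n) (Fin n) ℝ, A.PosSemidef → A.rank ≤ 1 → (∀ i j, A i j ∈ I) →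
        (A.map f).IsSymm ∧ (A.map f).rank ≤ 1) →
      ∀ x ∈ I, f x = 0) := by
  -- interval helpers
  have hub : ∀ z ∈ I, (z : EReal) < b := by
    rcases hI with ⟨rfl, -⟩ | ⟨rfl, -⟩ <;> exact fun z hz => hz.2
  have hlow : ∀ u ∈ I, ∀ z : ℝ, u ≤ z → (z : EReal) < b → z ∈ I := by
    rcases hI with ⟨rfl, -⟩ | ⟨rfl, -⟩
    · exact fun u hu z h1 h2 => ⟨lt_of_lt_of_le hu.1 h1, h2⟩
    · exact fun u hu z h1 h2 => ⟨le_trans hu.1 h1, h2⟩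
  have hmemle : ∀ u ∈ I, ∀ w ∈ I, ∀ z : ℝ, u ≤ z → z ≤ w → z ∈ I := by
    intro u hu w hw z h1 h2
    exact hlow u hu z h1 (lt_of_le_of_lt (EReal.coe_le_coe_iff.2 h2) (hub w hw))
  have hneg : ∀ z ∈ I, z < 0 → -z ∈ I := by
    rcases hI with ⟨rfl, hab⟩ | ⟨rfl, hab⟩
    · rintro z ⟨hz1, -⟩ hz0
      have ha0 : a < 0 := lt_trans hz1 hz0
      refine ⟨by linarith, lt_of_lt_of_le (EReal.coe_lt_coe_iff.2 ?_) hab⟩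
      rw [abs_of_neg ha0]; linarith
    · rintro z ⟨hz1, -⟩ hz0
      have ha0 : a < 0 := lt_of_le_of_lt hz1 hz0
      refine ⟨by linarith, lt_of_le_of_lt (EReal.coe_le_coe_iff.2 ?_) hab⟩
      rw [abs_of_neg ha0]; linarith
  have hsqz : ∀ t : ℝ, f t ^ 2 = 0 → f t = 0 := fun t ht =>
    pow_eq_zero_iff (two_ne_zero) |>.mp ht
  constructor
  · -- Part (1)
    constructor
    · intro h x hx y hy hx0 hy0
      constructor
      · intro hsI
        exact aux_key 2 le_rfl I f (Or.inl rfl) h hx hy hsI hx0 hy0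
          (Real.sq_sqrt (mul_nonneg hx0 hy0))
      · intro hsI
        exact aux_key 2 le_rfl I f (Or.inl rfl) h hx hy hsI hx0 hy0
          (by rw [neg_pow]; simp [Real.sq_sqrt (mul_nonneg hx0 hy0)])
    · intro hfe A hA hr hent
      have hsymm' : A.IsSymm := by
        ext i j
        have := congrFun (congrFun hA.1 i) j
        simpa [Matrix.conjTranspose_apply] using this
      have hs' : A 1 0 = A 0 1 := hsymm'.apply 0 1
      refine ⟨hsymm'.map f, ?_⟩
      set x := A 0 0 with hxdef
      set y := A 1 1 with hydef
      set s := A 0 1 with hsdef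
      have hx0 : 0 ≤ x := by simpa using hA.2 (Finsupp.single 0 1)
      have hy0 : 0 ≤ y := by simpa using hA.2 (Finsupp.single 1 1)
      have hxy : s ^ 2 = x * y := by
        have := matrix_minor A hr 0 1 0 1
        rw [hs'] at this
        rw [sq]; exact this.symm
      have habs : Real.sqrt (x * y) = |s| := by rw [← hxy, Real.sqrt_sq_eq_abs]
      have hfs : f s ^ 2 = f x * f y := by
        rcases le_or_gt 0 s with hpos | hnegs
        · have heq : Real.sqrt (x * y) = s := by rw [habs, abs_of_nonneg hpos]
          have := (hfe x (hent 0 0) y (hent 1 1) hx0 hy0).1 (heq ▸ hent 0 1)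
          rwa [heq] at this
        · have heq : -Real.sqrt (x * y) = s := by rw [habs, abs_of_neg hnegs]; ring
          have := (hfe x (hent 0 0) y (hent 1 1) hx0 hy0).2 (heq ▸ hent 0 1)
          rwa [heq] at this
      apply rank_le_one_of_det_eq_zero
      rw [Matrix.det_fin_two]
      simp only [Matrix.map_apply]
      rw [hs', ← hxdef, ← hydef, ← hsdef, ← hfs]
      ring
  · -- Part (2)
    intro n hn h0 p hp hpne hfp H x hx
    have key : ∀ u ∈ I, ∀ v ∈ I, ∀ s ∈ I, 0 ≤ u → 0 ≤ v → s ^ 2 = u * v →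
        f s ^ 2 = f u * f v := fun u hu v hv s hs h1 h2 h3 =>
      aux_key n hn I f (Or.inr h0) H hu hv hs h1 h2 h3
    obtain ⟨q, hqI, hq0, hfq⟩ : ∃ q ∈ I, 0 < q ∧ f q = 0 := by
      rcases lt_or_gt_of_ne hpne with hneg' | hpos
      · have hmp : -p ∈ I := hneg p hp hneg'
        have hthis := key (-p) hmp (-p) hmp p hp (by linarith) (by linarith) (by ring)
        refine ⟨-p, hmp, by linarith, hsqz _ ?_⟩
        calc f (-p) ^ 2 = f p ^ 2 := by rw [hthis, sq]
        _ = 0 := by rw [hfp]; ring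
      · exact ⟨p, hp, hpos, hfp⟩
    have hf0 : f 0 = 0 := by
      apply hsqz
      have := key q hqI 0 h0 0 h0 hq0.le le_rfl (by ring)
      rw [this, hfq, zero_mul]
    have hpos : ∀ z ∈ I, 0 < z → f z = 0 := by
      intro z hz hz0
      rcases le_or_gt z q with hle | hlt
      · have hβ0 : (0:ℝ) ≤ z ^ 2 / q := by positivity
        have hβle : z ^ 2 / q ≤ z := by rw [div_le_iff₀ hq0]; nlinarith
        have hβI : z ^ 2 / q ∈ I := hmemle 0 h0 z hz _ hβ0 hβle
        have hthis := key q hqI (z ^ 2 / q) hβI z hz hq0.le hβ0 (by field_simp)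
        rw [hfq, zero_mul] at hthis
        exact hsqz z hthis
      · set u := Real.sqrt z with hu
        have hupos : 0 < u := Real.sqrt_pos.2 hz0
        have hsqq : 0 < Real.sqrt q := Real.sqrt_pos.2 hq0
        set r := u / (u + Real.sqrt q) with hr
        have hr0 : (0:ℝ) ≤ r := by positivity
        have hr1 : r < 1 := by rw [hr, div_lt_one (by positivity)]; linarith
        set m : ℕ → ℝ := fun k => Nat.rec q (fun _ mk => Real.sqrt (z * mk)) k with hm
        have hmS : ∀ k, m (k + 1) = Real.sqrt (z * m k) := fun k => rfl
        have hinv : ∀ k, q ≤ m k ∧ m k ≤ z ∧ f (m k) = 0 ∧ z - m k ≤ r ^ k * (z - q) := by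
          intro k
          induction k with
          | zero => exact ⟨le_rfl, hlt.le, hfq, by rw [pow_zero, one_mul, show m 0 = q from rfl]⟩
          | succ k ih =>
            obtain ⟨h1, h2, h3, h4⟩ := ih
            have hmk0 : 0 < m k := lt_of_lt_of_le hq0 h1
            have hmkI : m k ∈ I := hmemle q hqI z hz _ h1 h2
            have hq_succ : q ≤ m (k + 1) := by
              rw [hmS]
              calc q = Real.sqrt (q * q) := (Real.sqrt_mul_self hq0.le).symm
              _ ≤ Real.sqrt (z * m k) := Real.sqrt_le_sqrt (by nlinarith)
            have hle_succ : m (k + 1) ≤ z := by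
              rw [hmS]
              calc Real.sqrt (z * m k) ≤ Real.sqrt (z * z) := Real.sqrt_le_sqrt (by nlinarith)
              _ = z := Real.sqrt_mul_self hz0.le
            have hmk1I : m (k + 1) ∈ I := hmemle q hqI z hz _ hq_succ hle_succ
            have hfmk1 : f (m (k + 1)) = 0 := by
              apply hsqz
              have hthis := key z hz (m k) hmkI (m (k + 1)) hmk1I hz0.le hmk0.le
                (by rw [hmS]; exact Real.sq_sqrt (by positivity))
              rw [hthis, h3, mul_zero]
            refine ⟨hq_succ, hle_succ, hfmk1, ?_⟩
            set v := Real.sqrt (m k) with hv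
            have hv0 : 0 < v := Real.sqrt_pos.2 hmk0
            have hvq : Real.sqrt q ≤ v := Real.sqrt_le_sqrt h1
            have hvu : v ≤ u := Real.sqrt_le_sqrt h2
            have huu : u * u = z := Real.mul_self_sqrt hz0.le
            have hvv : v * v = m k := Real.mul_self_sqrt hmk0.le
            have hmkuv : m (k + 1) = u * v := by rw [hmS, Real.sqrt_mul hz0.le]
            have key1 : (z - u * v) * (u + v) = u * (z - m k) := by
              rw [← huu, ← hvv]; ring
            have hz_uv : 0 ≤ z - u * v := by rw [← hmkuv]; linarith
            have key2 : (z - u * v) * (u + Real.sqrt q) ≤ u * (z - m k) := by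
              nlinarith [hz_uv, hvq]
            have hstep : z - m (k + 1) ≤ r * (z - m k) := by
              rw [hmkuv, hr, div_mul_eq_mul_div, le_div_iff₀ (by positivity)]
              nlinarith [key2]
            calc z - m (k + 1) ≤ r * (z - m k) := hstep
            _ ≤ r * (r ^ k * (z - q)) := by
                apply mul_le_mul_of_nonneg_left h4 hr0
            _ = r ^ (k + 1) * (z - q) := by ring
        obtain ⟨c, hc1, hc2⟩ := EReal.exists_between_coe_real (hub z hz)
        have hc1' : z < c := EReal.coe_lt_coe_iff.mp hc1
        have hcz : 0 < c := lt_trans hz0 hc1'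
        have hzc : z ^ 2 / c < z := by rw [div_lt_iff₀ hcz]; nlinarith
        have hε : 0 < (z - z ^ 2 / c) / (z - q) := div_pos (by linarith) (by linarith)
        obtain ⟨k, hk⟩ := exists_pow_lt_of_lt_one hε hr1
        obtain ⟨h1, h2, h3, h4⟩ := hinv k
        have hmk0 : 0 < m k := lt_of_lt_of_le hq0 h1
        have h5 : r ^ k * (z - q) < z - z ^ 2 / c := (lt_div_iff₀ (by linarith)).mp hk
        have hmkgt : z ^ 2 / c < m k := by linarith
        have hβlt : z ^ 2 / m k < c := by
          rw [div_lt_iff₀ hmk0]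
          have h6 : z ^ 2 < m k * c := (div_lt_iff₀ hcz).mp hmkgt
          linarith [h6, mul_comm (m k) c]
        have hβI : z ^ 2 / m k ∈ I := by
          apply hlow 0 h0 _ (by positivity)
          exact lt_trans (EReal.coe_lt_coe_iff.2 hβlt) hc2
        have hmkI : m k ∈ I := hmemle q hqI z hz _ h1 h2
        have hthis := key (m k) hmkI (z ^ 2 / m k) hβI z hz hmk0.le (by positivity)
          (by field_simp)
        rw [h3, zero_mul] at hthis
        exact hsqz z hthis
    rcases lt_trichotomy x 0 with hx0 | hx0 | hx0
    · have hmx : -x ∈ I := hneg x hx hx0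
      have hthis := key (-x) hmx (-x) hmx x hx (by linarith) (by linarith) (by ring)
      have hz := hpos (-x) hmx (by linarith)
      exact hsqz x (by rw [hthis, hz, mul_zero])
    · rw [hx0]; exact hf0
    · exact hpos x hx hx0
end

section
/- Let 0 < R ≤ ∞, let I = [0,R) or I = (-R,R), and let f, g : I → ℝ be such that g(x) ≠ 0 whenever x ≠ 0. Assume the limit c := lim_{x→0, x∈I, x≠0} f(x)/g(x) exists, and define h_c : I → ℝ by h_c(x) = f(x)/g(x) for x ≠ 0 and h_c(0) = c. Fix integers n ≥ 2 and 1 ≤ k ≤ n. Then: (1) if g[A] ∈ S_n^1 for all A ∈ P_n^1(I) and f[A] ∈ S_n^k for all A ∈ P_n^1(I), then h_c[A] ∈ S_n^k for all A ∈ P_n^1(I); conversely, if additionally f(0) = c·g(0) and h_c[A] ∈ S_n^k for all A ∈ P_n^1(I), then f[A] ∈ S_n^k for all A ∈ P_n^1(I). (2) If g[A] ∈ P_n^1 for all A ∈ P_n^1(I) and f[A] ∈ P_n for all A ∈ P_n^1(I), then c ≥ 0 and h_c[A] ∈ P_n for all A ∈ P_n^1(I). -/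
open Matrix Set Filter
open scoped Topology

namespace QPRB

/-! ### Rank via Gram determinants -/

lemma rank_eq_finrank (G : Matrix (Fin m) (Fin m) ℝ) :
    G.rank = Module.finrank ℝ (LinearMap.range G.mulVecLin) := rfl

lemma rank_le_iff_det_gram {n : ℕ} (B : Matrix (Fin n) (Fin n) ℝ) (k : ℕ) :
    B.rank ≤ k ↔ ∀ X : Matrix (Fin n) (Fin (k+1)) ℝ, ((B * X)ᵀ * (B * X)).det = 0 := by
  constructor
  · intro h X
    by_contra hd
    have hu : IsUnit ((B * X)ᵀ * (B * X)) :=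
      (Matrix.isUnit_iff_isUnit_det _).2 (isUnit_iff_ne_zero.2 hd)
    have h1 := Matrix.rank_of_isUnit _ hu
    have h2 : ((B * X)ᵀ * (B * X)).rank ≤ k :=
      le_trans (Matrix.rank_mul_le_right _ _)
        (le_trans (Matrix.rank_mul_le_left B X) h)
    rw [h1] at h2
    simp at h2
  · intro hX
    by_contra h
    push_neg at h
    have hfr : k + 1 ≤ Module.finrank ℝ (LinearMap.range B.mulVecLin) := h
    obtain ⟨w, hw⟩ := exists_linearIndependent_of_le_finrank hfr
    have hv : LinearIndependent ℝ (fun i => ((w i : Fin n → ℝ))) :=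
      hw.map' (Submodule.subtype _) (Submodule.ker_subtype _)
    choose x hx using fun i => LinearMap.mem_range.1 (w i).2
    set X : Matrix (Fin n) (Fin (k+1)) ℝ := Matrix.of fun a b => x b a with hXdef
    have hBX : (B * X)ᵀ = Matrix.of (fun b => ((w b : Fin n → ℝ))) := by
      ext b a
      have := hx b
      rw [Matrix.mulVecLin_apply] at this
      calc (B * X)ᵀ b a = ∑ c, B a c * x b c := by
            simp [Matrix.mul_apply, hXdef]
        _ = (B *ᵥ x b) a := by simp [Matrix.mulVec, dotProduct]
        _ = (w b : Fin n → ℝ) a := by rw [this]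
    have hr1 : ((B * X)ᵀ).rank = k + 1 := by
      rw [hBX]
      have : LinearIndependent ℝ (Matrix.of (fun b => ((w b : Fin n → ℝ)))) := hv
      rw [this.rank_matrix]
      simp
    have hr2 : (B * X).rank = k + 1 := by
      rw [← Matrix.rank_transpose]; exact hr1
    have hG : ((B * X)ᵀ * (B * X)).rank = k + 1 := by
      rw [Matrix.rank_transpose_mul_self]; exact hr2
    obtain ⟨y, hy0, hyz⟩ := Matrix.exists_mulVec_eq_zero_iff.2 (hX X)
    set G := (B * X)ᵀ * (B * X) with hGdef
    have hker : y ∈ LinearMap.ker G.mulVecLin := by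
      rw [LinearMap.mem_ker, Matrix.mulVecLin_apply]; exact hyz
    have hne : LinearMap.ker G.mulVecLin ≠ ⊥ := by
      intro hbot
      rw [hbot, Submodule.mem_bot] at hker
      exact hy0 hker
    have h0 : Module.finrank ℝ (LinearMap.ker G.mulVecLin) ≠ 0 := by
      intro h0
      exact hne (Submodule.finrank_eq_zero.1 h0)
    have hsum := LinearMap.finrank_range_add_finrank_ker G.mulVecLin
    rw [Module.finrank_fintype_fun_eq_card, Fintype.card_fin] at hsum
    rw [rank_eq_finrank] at hG
    omega

lemma rank_le_of_tendsto {α : Type*} {l : Filter α} [l.NeBot] {n k : ℕ}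
    {M : α → Matrix (Fin n) (Fin n) ℝ} {B : Matrix (Fin n) (Fin n) ℝ}
    (hM : ∀ᶠ a in l, (M a).rank ≤ k) (hT : Tendsto M l (nhds B)) : B.rank ≤ k := by
  rw [rank_le_iff_det_gram]
  intro X
  have cont : Continuous fun C : Matrix (Fin n) (Fin n) ℝ => ((C * X)ᵀ * (C * X)).det :=
    (((continuous_id.matrix_mul continuous_const).matrix_transpose).matrix_mul
      (continuous_id.matrix_mul continuous_const)).matrix_det
  have h1 : Tendsto (fun a => ((M a * X)ᵀ * (M a * X)).det) l (nhds (((B * X)ᵀ * (B * X)).det)) :=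
    (cont.tendsto B).comp hT
  have h2 : (fun a => ((M a * X)ᵀ * (M a * X)).det) =ᶠ[l] fun _ => (0:ℝ) :=
    hM.mono fun a ha => (rank_le_iff_det_gram _ _).1 ha X
  have h3 : Tendsto (fun _ : α => (0:ℝ)) l (nhds (((B * X)ᵀ * (B * X)).det)) := h1.congr' h2
  exact (tendsto_nhds_unique h3 tendsto_const_nhds)

lemma posSemidef_of_tendsto {α : Type*} {l : Filter α} [l.NeBot] {n : ℕ}
    {M : α → Matrix (Fin n) (Fin n) ℝ} {B : Matrix (Fin n) (Fin n) ℝ}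
    (hB : B.IsHermitian) (h : ∀ᶠ a in l, (M a).PosSemidef) (hT : Tendsto M l (nhds B)) :
    B.PosSemidef := by
  refine .of_dotProduct_mulVec_nonneg hB fun x => ?_
  have cont : Continuous fun C : Matrix (Fin n) (Fin n) ℝ => dotProduct (star x) (C *ᵥ x) :=
    continuous_const.dotProduct (continuous_id.matrix_mulVec continuous_const)
  exact ge_of_tendsto ((cont.tendsto B).comp hT) (h.mono fun a ha => ha.dotProduct_mulVec_nonneg x)

/-! ### submatrix rank and 2x2 minors -/

lemma rank_submatrix_le' {m r s : ℕ} (A : Matrix (Fin m) (Fin m) ℝ)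
    (f : Fin r → Fin m) (g : Fin s → Fin m) : (A.submatrix f g).rank ≤ A.rank := by
  have hE : A.submatrix f g =
      (Matrix.of fun a b => if f a = b then (1:ℝ) else 0) * A *
        (Matrix.of fun b a => if g a = b then (1:ℝ) else 0) := by
    have h1 : (Matrix.of fun a b => if f a = b then (1:ℝ) else 0) * A = A.submatrix f id := by
      ext a j
      simp [Matrix.mul_apply, ite_mul]
    rw [h1]
    ext a b
    simp [Matrix.mul_apply, mul_ite]
  rw [hE]
  exact le_trans (Matrix.rank_mul_le_left _ _)
    (le_trans (Matrix.rank_mul_le_right _ _) le_rfl)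

lemma minor2 {n : ℕ} (B : Matrix (Fin n) (Fin n) ℝ) (hr : B.rank ≤ 1) (i j p q : Fin n) :
    B i p * B j q = B i q * B j p := by
  by_contra h
  set M := B.submatrix ![i, j] ![p, q] with hM
  have hrM : M.rank ≤ 1 := le_trans (rank_submatrix_le' B _ _) hr
  have hdet : M.det ≠ 0 := by
    rw [Matrix.det_fin_two]
    have e00 : M 0 0 = B i p := rfl
    have e01 : M 0 1 = B i q := rfl
    have e10 : M 1 0 = B j p := rfl
    have e11 : M 1 1 = B j q := rfl
    rw [e00, e01, e10, e11]
    exact sub_ne_zero.2 h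
  have := Matrix.rank_of_isUnit M ((Matrix.isUnit_iff_isUnit_det M).2 (isUnit_iff_ne_zero.2 hdet))
  rw [this] at hrM
  simp at hrM

lemma anchor {n : ℕ} (B : Matrix (Fin n) (Fin n) ℝ) (hs : ∀ i j, B i j = B j i)
    (hr : B.rank ≤ 1) (i j : Fin n) (hij : B i j ≠ 0) : B i i ≠ 0 := by
  intro h
  have hm := minor2 B hr i j i j
  rw [h, zero_mul, hs j i] at hm
  exact hij (mul_self_eq_zero.1 hm.symm)

lemma sym_rank_one_struct {n : ℕ} (B : Matrix (Fin n) (Fin n) ℝ) (hs : ∀ i j, B i j = B j i)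
    (hr : B.rank ≤ 1) (p : Fin n) (hp : B p p ≠ 0) (i j : Fin n) :
    B i j = B p i * B p j / B p p := by
  have hm := minor2 B hr i p j p
  rw [eq_div_iff hp]
  rw [← hs i p]
  linarith [hm]

lemma sym_dyad {n : ℕ} (B : Matrix (Fin n) (Fin n) ℝ) (hs : ∀ i j, B i j = B j i)
    (hr : B.rank ≤ 1) : ∃ t : ℝ, ∃ v : Fin n → ℝ, ∀ i j, B i j = t * v i * v j := by
  by_cases hB : ∀ i j, B i j = 0
  · exact ⟨0, fun _ => 0, fun i j => by simp [hB]⟩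
  · push_neg at hB
    obtain ⟨p, q, hpq⟩ := hB
    have hp := anchor B hs hr p q hpq
    refine ⟨(B p p)⁻¹, fun i => B p i, fun i j => ?_⟩
    rw [sym_rank_one_struct B hs hr p hp i j, div_eq_mul_inv]
    ring

lemma psd_diag_nonneg {n : ℕ} {A : Matrix (Fin n) (Fin n) ℝ} (hA : A.PosSemidef) (i : Fin n) :
    0 ≤ A i i := by
  have := hA.dotProduct_mulVec_nonneg (Pi.single i 1)
  simpa [dotProduct, Matrix.mulVec, Pi.single_apply, Finset.sum_ite_eq] using this

lemma psd_symm {n : ℕ} {A : Matrix (Fin n) (Fin n) ℝ} (hA : A.PosSemidef) (i j : Fin n) :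
    A i j = A j i := by
  have := hA.1.apply j i
  simpa using this

lemma psd_rank_one_dyad {n : ℕ} (A : Matrix (Fin n) (Fin n) ℝ) (hA : A.PosSemidef)
    (hr : A.rank ≤ 1) : ∃ u : Fin n → ℝ, ∀ i j, A i j = u i * u j := by
  have hs : ∀ i j, A i j = A j i := psd_symm hA
  by_cases hA0 : ∀ i j, A i j = 0
  · exact ⟨fun _ => 0, fun i j => by simp [hA0]⟩
  · push_neg at hA0
    obtain ⟨p, q, hpq⟩ := hA0
    have hp : A p p ≠ 0 := anchor A hs hr p q hpq
    have hpp : 0 < A p p := lt_of_le_of_ne (psd_diag_nonneg hA p) (Ne.symm hp)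
    refine ⟨fun i => A p i / Real.sqrt (A p p), fun i j => ?_⟩
    have hsq : Real.sqrt (A p p) * Real.sqrt (A p p) = A p p := Real.mul_self_sqrt hpp.le
    rw [div_mul_div_comm, hsq]
    exact sym_rank_one_struct A hs hr p hp i j

/-! ### dyad matrices are PSD of rank ≤ 1 -/

lemma dyad_posSemidef_rank {n : ℕ} (u : Fin n → ℝ) :
    (Matrix.of fun i j => u i * u j : Matrix (Fin n) (Fin n) ℝ).PosSemidef ∧
      (Matrix.of fun i j => u i * u j : Matrix (Fin n) (Fin n) ℝ).rank ≤ 1 := by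
  set Rw : Matrix (Fin 1) (Fin n) ℝ := Matrix.of fun _ j => u j with hRw
  have hE : (Matrix.of fun i j => u i * u j : Matrix (Fin n) (Fin n) ℝ) = Rwᴴ * Rw := by
    ext i j
    simp [Matrix.mul_apply, hRw, Matrix.conjTranspose_apply]
  rw [hE]
  refine ⟨Matrix.posSemidef_conjTranspose_mul_self Rw, ?_⟩
  refine le_trans (Matrix.rank_mul_le_right _ _) ?_
  simpa using Matrix.rank_le_card_height Rw

/-! ### diagonal congruence -/

lemma smul_diag_conj_apply {n : ℕ} (t : ℝ) (v : Fin n → ℝ) (F : Matrix (Fin n) (Fin n) ℝ)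
    (i j : Fin n) :
    (t • (Matrix.diagonal v * F * Matrix.diagonal v)) i j = t * (v i * F i j * v j) := by
  simp only [Matrix.smul_apply, Matrix.mul_diagonal, Matrix.diagonal_mul, smul_eq_mul]
  try ring

lemma diag_conj_apply {n : ℕ} (v : Fin n → ℝ) (F : Matrix (Fin n) (Fin n) ℝ) (i j : Fin n) :
    (Matrix.diagonal v * F * Matrix.diagonal v) i j = v i * F i j * v j := by
  simp only [Matrix.mul_diagonal, Matrix.diagonal_mul]
  try ring

lemma rank_smul_conj_le {n : ℕ} (t : ℝ) (v : Fin n → ℝ) (F : Matrix (Fin n) (Fin n) ℝ) :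
    (t • (Matrix.diagonal v * F * Matrix.diagonal v)).rank ≤ F.rank := by
  have h1 : t • (Matrix.diagonal v * F * Matrix.diagonal v) =
      Matrix.diagonal (fun i => t * v i) * F * Matrix.diagonal v := by
    ext i j
    simp only [Matrix.smul_apply, Matrix.mul_diagonal, Matrix.diagonal_mul, smul_eq_mul]
    try ring
  rw [h1]
  exact le_trans (Matrix.rank_mul_le_left _ _) (Matrix.rank_mul_le_right _ _)

lemma posSemidef_diag_conj {n : ℕ} {F : Matrix (Fin n) (Fin n) ℝ} (hF : F.PosSemidef)
    (v : Fin n → ℝ) : (Matrix.diagonal v * F * Matrix.diagonal v).PosSemidef := by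
  have h := hF.mul_mul_conjTranspose_same (Matrix.diagonal v)
  rwa [Matrix.diagonal_conjTranspose, show star v = v from funext fun i => star_trivial _] at h

lemma map_isSymm {n : ℕ} (A : Matrix (Fin n) (Fin n) ℝ) (hs : ∀ i j, A i j = A j i)
    (φ : ℝ → ℝ) : (A.map φ).IsSymm :=
  Matrix.IsSymm.ext fun i j => by rw [Matrix.map_apply, Matrix.map_apply, hs j i]

lemma map_isHermitian {n : ℕ} (A : Matrix (Fin n) (Fin n) ℝ) (hs : ∀ i j, A i j = A j i)
    (φ : ℝ → ℝ) : (A.map φ).IsHermitian :=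
  Matrix.IsHermitian.ext fun i j => by
    rw [Matrix.map_apply, Matrix.map_apply, star_trivial, hs j i]


open scoped Topology

/-! ### small elements of I -/

lemma small_mem (R : EReal) (hR : 0 < R) (I : Set ℝ)
    (hI : I = {x : ℝ | 0 ≤ x ∧ (x : EReal) < R} ∨
          I = {x : ℝ | -R < (x : EReal) ∧ (x : EReal) < R}) :
    ∃ δ : ℝ, 0 < δ ∧ ∀ y : ℝ, |y| < δ →
      (0 < y ∨ (I = {x : ℝ | -R < (x : EReal) ∧ (x : EReal) < R} ∧ y ≠ 0)) → y ∈ I := by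
  obtain ⟨δ, hδ, hbd⟩ : ∃ δ : ℝ, 0 < δ ∧ ∀ y : ℝ, |y| < δ →
      ((y : EReal) < R ∧ -R < (y : EReal)) := by
    induction R using EReal.rec with
    | bot => exact absurd hR (by simp)
    | coe r =>
        have hr : 0 < r := by exact_mod_cast hR
        refine ⟨r, hr, fun y hy => ⟨by exact_mod_cast (abs_lt.1 hy).2, ?_⟩⟩
        have h1 : -r < y := (abs_lt.1 hy).1
        rw [show -((r : ℝ) : EReal) = ((-r : ℝ) : EReal) by norm_cast]
        exact_mod_cast h1
    | top =>
        refine ⟨1, one_pos, fun y _ => ⟨EReal.coe_lt_top y, ?_⟩⟩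
        rw [show -(⊤ : EReal) = ⊥ from rfl]
        exact EReal.bot_lt_coe y
  refine ⟨δ, hδ, fun y hy hcase => ?_⟩
  rcases hcase with hpos | ⟨hI2, _⟩
  · rcases hI with h1 | h2
    · rw [h1]; exact ⟨hpos.le, (hbd y hy).1⟩
    · rw [h2]; exact ⟨(hbd y hy).2, (hbd y hy).1⟩
  · rw [hI2]; exact ⟨(hbd y hy).2, (hbd y hy).1⟩

/-! ### the approximating family -/

lemma key (R : EReal) (hR : 0 < R) (I : Set ℝ)
    (hI : I = {x : ℝ | 0 ≤ x ∧ (x : EReal) < R} ∨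
          I = {x : ℝ | -R < (x : EReal) ∧ (x : EReal) < R})
    (f g : ℝ → ℝ) (c : ℝ)
    (hc : Tendsto (fun x => f x / g x) (nhdsWithin 0 (I \ {0})) (nhds c))
    {n : ℕ} (A : Matrix (Fin n) (Fin n) ℝ) (hA : A.PosSemidef) (hAr : A.rank ≤ 1)
    (hAI : ∀ i j, A i j ∈ I) :
    ∃ Aε : ℝ → Matrix (Fin n) (Fin n) ℝ,
      (∀ᶠ ε in 𝓝[>] (0:ℝ), (Aε ε).PosSemidef ∧ (Aε ε).rank ≤ 1 ∧
        (∀ i j, Aε ε i j ∈ I) ∧ (∀ i j, Aε ε i j ≠ 0)) ∧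
      Tendsto (fun ε => ((Aε ε).map fun x => if x = 0 then c else f x / g x))
        (𝓝[>] (0:ℝ))
        (nhds (A.map fun x => if x = 0 then c else f x / g x)) := by
  obtain ⟨u0, hu0⟩ := psd_rank_one_dyad A hA hAr
  obtain ⟨u, hu, hucase⟩ : ∃ u : Fin n → ℝ, (∀ i j, A i j = u i * u j) ∧
      ((∀ i, 0 ≤ u i) ∨ I = {x : ℝ | -R < (x : EReal) ∧ (x : EReal) < R}) := by
    rcases hI with h1 | h2
    · refine ⟨fun i => |u0 i|, fun i j => ?_, Or.inl fun i => abs_nonneg _⟩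
      have hnn : 0 ≤ A i j := by have := hAI i j; rw [h1] at this; exact this.1
      rw [← abs_mul, ← hu0 i j]
      exact (abs_of_nonneg hnn).symm
    · exact ⟨u0, hu0, Or.inr h2⟩
  obtain ⟨δ, hδ, hmemδ⟩ := small_mem R hR I hI
  set M : ℝ := 1 + ∑ i, |u i| with hMdef
  have hM1 : (1:ℝ) ≤ M := le_add_of_nonneg_right (Finset.sum_nonneg fun i _ => abs_nonneg _)
  have hM0 : (0:ℝ) < M := by linarith
  have hMu : ∀ i, |u i| ≤ M := fun i => by
    have h1 : |u i| ≤ ∑ i, |u i| :=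
      Finset.single_le_sum (f := fun i => |u i|) (fun i _ => abs_nonneg _) (Finset.mem_univ i)
    linarith
  set uu : ℝ → Fin n → ℝ := fun ε i => if u i = 0 then ε else u i with huu
  have hG : Ioo (0:ℝ) (min 1 (δ / M)) ∈ 𝓝[>] (0:ℝ) :=
    Ioo_mem_nhdsGT_of_mem ⟨le_refl 0, lt_min one_pos (div_pos hδ hM0)⟩
  have hev : ∀ᶠ ε in 𝓝[>] (0:ℝ),
      ((Matrix.of fun i j => uu ε i * uu ε j : Matrix (Fin n) (Fin n) ℝ)).PosSemidef ∧
      ((Matrix.of fun i j => uu ε i * uu ε j : Matrix (Fin n) (Fin n) ℝ)).rank ≤ 1 ∧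
      (∀ i j, uu ε i * uu ε j ∈ I) ∧ (∀ i j, uu ε i * uu ε j ≠ 0) := by
    filter_upwards [hG] with ε hε
    obtain ⟨hε0, hεm⟩ := hε
    have hε1 : ε < 1 := lt_of_lt_of_le hεm (min_le_left _ _)
    have hεδM : ε < δ / M := lt_of_lt_of_le hεm (min_le_right _ _)
    have hne : ∀ i, uu ε i ≠ 0 := by
      intro i
      simp only [huu]
      split_ifs with h
      · exact ne_of_gt hε0
      · exact h
    have habs : ∀ i, |uu ε i| ≤ M := by
      intro i
      simp only [huu]
      split_ifs with h
      · rw [abs_of_pos hε0]; linarith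
      · exact hMu i
    have hnz : ∀ i j, uu ε i * uu ε j ≠ 0 := fun i j => mul_ne_zero (hne i) (hne j)
    have hmem : ∀ i j, uu ε i * uu ε j ∈ I := by
      intro i j
      by_cases hz : u i = 0 ∨ u j = 0
      · have hsmall : |uu ε i * uu ε j| < δ := by
          rcases hz with hi | hj
          · have h1 : |uu ε i| = ε := by
              simp only [huu]; rw [if_pos hi, abs_of_pos hε0]
            calc |uu ε i * uu ε j| = ε * |uu ε j| := by rw [abs_mul, h1]
              _ ≤ ε * M := mul_le_mul_of_nonneg_left (habs j) hε0.le
              _ < δ := (lt_div_iff₀ hM0).1 hεδM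
          · have h1 : |uu ε j| = ε := by
              simp only [huu]; rw [if_pos hj, abs_of_pos hε0]
            calc |uu ε i * uu ε j| = |uu ε i| * ε := by rw [abs_mul, h1]
              _ ≤ M * ε := mul_le_mul_of_nonneg_right (habs i) hε0.le
              _ < δ := by
                  have := (lt_div_iff₀ hM0).1 hεδM
                  linarith [this, mul_comm M ε]
        apply hmemδ _ hsmall
        rcases hucase with hpos | hI2
        · left
          have hposf : ∀ l, 0 < uu ε l := by
            intro l
            simp only [huu]
            split_ifs with h
            · exact hε0
            · exact lt_of_le_of_ne (hpos l) (Ne.symm h)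
          exact mul_pos (hposf i) (hposf j)
        · exact Or.inr ⟨hI2, hnz i j⟩
      · push_neg at hz
        have heq : uu ε i * uu ε j = A i j := by
          simp only [huu]
          rw [if_neg hz.1, if_neg hz.2]
          exact (hu i j).symm
        rw [heq]
        exact hAI i j
    obtain ⟨hpsd, hrk⟩ := dyad_posSemidef_rank (uu ε)
    exact ⟨hpsd, hrk, hmem, hnz⟩
  refine ⟨fun ε => Matrix.of fun i j => uu ε i * uu ε j, hev, ?_⟩
  refine tendsto_pi_nhds.2 ?_
  intro i
  rw [tendsto_pi_nhds]
  intro j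
  simp only [Matrix.map_apply, Matrix.of_apply]
  by_cases hz : u i = 0 ∨ u j = 0
  · have hA0 : A i j = 0 := by
      rw [hu i j]
      rcases hz with hi | hj
      · rw [hi, zero_mul]
      · rw [hj, mul_zero]
    rw [hA0]
    simp only [if_pos rfl]
    have heI : ∀ᶠ ε in 𝓝[>] (0:ℝ), uu ε i * uu ε j ∈ I \ {0} :=
      hev.mono fun ε hε => ⟨hε.2.2.1 i j, hε.2.2.2 i j⟩
    have hid : Tendsto (fun ε : ℝ => ε) (𝓝[>] (0:ℝ)) (nhds 0) :=
      tendsto_id.mono_left nhdsWithin_le_nhds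
    have he0 : Tendsto (fun ε => uu ε i * uu ε j) (𝓝[>] (0:ℝ)) (nhds 0) := by
      by_cases hi : u i = 0 <;> by_cases hj : u j = 0
      · have : (fun ε => uu ε i * uu ε j) = fun ε : ℝ => ε * ε :=
          funext fun ε => by simp only [huu]; rw [if_pos hi, if_pos hj]
        rw [this]; simpa using hid.mul hid
      · have : (fun ε => uu ε i * uu ε j) = fun ε : ℝ => ε * u j :=
          funext fun ε => by simp only [huu]; rw [if_pos hi, if_neg hj]
        rw [this]; simpa using hid.mul_const (u j)
      · have : (fun ε => uu ε i * uu ε j) = fun ε : ℝ => u i * ε :=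
          funext fun ε => by simp only [huu]; rw [if_neg hi, if_pos hj]
        rw [this]; simpa using hid.const_mul (u i)
      · exact absurd hz (by push_neg; exact ⟨hi, hj⟩)
    have heW : Tendsto (fun ε => uu ε i * uu ε j) (𝓝[>] (0:ℝ)) (nhdsWithin 0 (I \ {0})) := by
      rw [tendsto_nhdsWithin_iff]
      exact ⟨he0, heI⟩
    have hcomp := hc.comp heW
    refine Tendsto.congr' ?_ hcomp
    exact heI.mono fun ε hε => (if_neg hε.2).symm
  · push_neg at hz
    have heq : ∀ ε, uu ε i * uu ε j = A i j := fun ε => by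
      simp only [huu]
      rw [if_neg hz.1, if_neg hz.2]
      exact (hu i j).symm
    simp only [heq]
    exact tendsto_const_nhds

end QPRB

open QPRB

/-- Let `I = [0,R)` or `(-R,R)` with `0 < R ≤ ∞`, and `f, g : I → ℝ` with `g` nonzero off
the origin.  Suppose `c = lim_{x → 0, x ∈ I \ {0}} f(x)/g(x)` exists, and let
`h_c(x) = f(x)/g(x)` for `x ≠ 0`, `h_c(0) = c`.  Fix `n ≥ 2`, `1 ≤ k ≤ n`.
(1) If `g[-] : P_n^1(I) → S_n^1` and `f[-] : P_n^1(I) → S_n^k`, then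
`h_c[-] : P_n^1(I) → S_n^k`; conversely if moreover `f(0) = c·g(0)` and
`h_c[-] : P_n^1(I) → S_n^k` then `f[-] : P_n^1(I) → S_n^k`.
(2) If `g[-] : P_n^1(I) → P_n^1` and `f[-] : P_n^1(I) → P_n`, then `c ≥ 0` and
`h_c[A]` is positive semidefinite for every `A ∈ P_n^1(I)`. -/
theorem quotient_preserves_rank_bound
    (R : EReal) (hR : 0 < R) (I : Set ℝ)
    (hI : I = {x : ℝ | 0 ≤ x ∧ (x : EReal) < R} ∨
          I = {x : ℝ | -R < (x : EReal) ∧ (x : EReal) < R})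
    (f g : ℝ → ℝ) (hg : ∀ x ∈ I, x ≠ 0 → g x ≠ 0) (c : ℝ)
    (hc : Tendsto (fun x => f x / g x) (nhdsWithin 0 (I \ {0})) (nhds c))
    (n k : ℕ) (hn : 2 ≤ n) (hk1 : 1 ≤ k) (hkn : k ≤ n) :
    ((∀ A : Matrix (Fin n) (Fin n) ℝ, A.PosSemidef → A.rank ≤ 1 → (∀ i j, A i j ∈ I) →
        (A.map g).IsSymm ∧ (A.map g).rank ≤ 1) →
      (((∀ A : Matrix (Fin n) (Fin n) ℝ, A.PosSemidef → A.rank ≤ 1 → (∀ i j, A i j ∈ I) →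
          (A.map f).IsSymm ∧ (A.map f).rank ≤ k) →
        (∀ A : Matrix (Fin n) (Fin n) ℝ, A.PosSemidef → A.rank ≤ 1 → (∀ i j, A i j ∈ I) →
          (A.map fun x => if x = 0 then c else f x / g x).IsSymm ∧
          (A.map fun x => if x = 0 then c else f x / g x).rank ≤ k)) ∧
       (f 0 = c * g 0 →
        (∀ A : Matrix (Fin n) (Fin n) ℝ, A.PosSemidef → A.rank ≤ 1 → (∀ i j, A i j ∈ I) →
          (A.map fun x => if x = 0 then c else f x / g x).IsSymm ∧
          (A.map fun x => if x = 0 then c else f x / g x).rank ≤ k) →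
        (∀ A : Matrix (Fin n) (Fin n) ℝ, A.PosSemidef → A.rank ≤ 1 → (∀ i j, A i j ∈ I) →
          (A.map f).IsSymm ∧ (A.map f).rank ≤ k)))) ∧
    ((∀ A : Matrix (Fin n) (Fin n) ℝ, A.PosSemidef → A.rank ≤ 1 → (∀ i j, A i j ∈ I) →
        (A.map g).PosSemidef ∧ (A.map g).rank ≤ 1) →
      (∀ A : Matrix (Fin n) (Fin n) ℝ, A.PosSemidef → A.rank ≤ 1 → (∀ i j, A i j ∈ I) →
        (A.map f).PosSemidef) →
      (0 ≤ c ∧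
        ∀ A : Matrix (Fin n) (Fin n) ℝ, A.PosSemidef → A.rank ≤ 1 → (∀ i j, A i j ∈ I) →
          (A.map fun x => if x = 0 then c else f x / g x).PosSemidef)) := by
  have hnpos : 0 < n := by omega
  constructor
  · intro hgp
    constructor
    · -- part 1a
      intro hfp A hA hAr hAI
      have hsA := psd_symm hA
      refine ⟨map_isSymm A hsA _, ?_⟩
      obtain ⟨Aε, hev, hT⟩ := key R hR I hI f g c hc A hA hAr hAI
      refine rank_le_of_tendsto ?_ hT
      filter_upwards [hev] with ε hε
      obtain ⟨hps, hr1, hmem, hnz⟩ := hε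
      obtain ⟨hgs, hgr⟩ := hgp (Aε ε) hps hr1 hmem
      obtain ⟨hfs, hfr⟩ := hfp (Aε ε) hps hr1 hmem
      set B := (Aε ε).map g with hBdef
      have hBnz : ∀ i j, B i j ≠ 0 := fun i j => hg _ (hmem i j) (hnz i j)
      have hsB : ∀ i j, B i j = B j i := fun i j => (hgs.apply i j).symm
      set p : Fin n := ⟨0, hnpos⟩ with hpdef
      have hp : B p p ≠ 0 := hBnz p p
      have hq := sym_rank_one_struct B hsB hgr p hp
      have hrepr : (Aε ε).map (fun x => if x = 0 then c else f x / g x) =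
          (B p p) • (Matrix.diagonal (fun i => (B p i)⁻¹) * ((Aε ε).map f) *
            Matrix.diagonal (fun i => (B p i)⁻¹)) := by
        ext i j
        rw [smul_diag_conj_apply]
        simp only [Matrix.map_apply]
        rw [if_neg (hnz i j)]
        have hBij : g (Aε ε i j) = B p i * B p j / B p p := by
          rw [show g (Aε ε i j) = B i j from rfl]
          exact hq i j
        rw [hBij]
        field_simp
      rw [hrepr]
      exact le_trans (rank_smul_conj_le _ _ _) hfr
    · -- part 1b
      intro hf0 hhp A hA hAr hAI
      have hsA := psd_symm hA
      refine ⟨map_isSymm A hsA _, ?_⟩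
      obtain ⟨hgs, hgr⟩ := hgp A hA hAr hAI
      set B := A.map g with hBdef
      have hsB : ∀ i j, B i j = B j i := fun i j => (hgs.apply i j).symm
      obtain ⟨t, v, htv⟩ := sym_dyad B hsB hgr
      obtain ⟨hhs, hhr⟩ := hhp A hA hAr hAI
      have hrepr : A.map f = t • (Matrix.diagonal v *
          (A.map (fun x => if x = 0 then c else f x / g x)) * Matrix.diagonal v) := by
        ext i j
        rw [smul_diag_conj_apply]
        simp only [Matrix.map_apply]
        have hBij : t * v i * v j = g (A i j) := by
          rw [show g (A i j) = B i j from rfl]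
          exact (htv i j).symm
        by_cases h0 : A i j = 0
        · rw [if_pos h0]
          rw [h0] at hBij ⊢
          rw [hf0]
          rw [← hBij]
          ring
        · rw [if_neg h0]
          have hgne : g (A i j) ≠ 0 := hg _ (hAI i j) h0
          rw [← hBij]
          have hne2 : t * v i * v j ≠ 0 := by rw [hBij]; exact hgne
          obtain ⟨⟨ht, hvi⟩, hvj⟩ : (t ≠ 0 ∧ v i ≠ 0) ∧ v j ≠ 0 := by
            rwa [mul_ne_zero_iff, mul_ne_zero_iff] at hne2
          field_simp
      rw [hrepr]
      exact le_trans (rank_smul_conj_le _ _ _) hhr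
  · -- part 2
    intro hgp hfp
    have hpos : ∀ x : ℝ, x ∈ I → 0 < x → 0 ≤ f x / g x := by
      intro x hxI hx0
      set u : Fin n → ℝ := fun _ => Real.sqrt x with hu
      have hx : ∀ i j : Fin n, u i * u j = x := fun i j => Real.mul_self_sqrt hx0.le
      obtain ⟨hps, hrk⟩ := dyad_posSemidef_rank u
      have hmem : ∀ i j, (Matrix.of fun i j => u i * u j : Matrix (Fin n) (Fin n) ℝ) i j ∈ I :=
        fun i j => by rw [Matrix.of_apply, hx i j]; exact hxI
      have hgP := hgp _ hps hrk hmem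
      have hfP := hfp _ hps hrk hmem
      set p : Fin n := ⟨0, hnpos⟩ with hpdef
      have hf : 0 ≤ f x := by
        have := psd_diag_nonneg hfP p
        rwa [Matrix.map_apply, Matrix.of_apply, hx p p] at this
      have hgd : 0 ≤ g x := by
        have := psd_diag_nonneg hgP.1 p
        rwa [Matrix.map_apply, Matrix.of_apply, hx p p] at this
      have hgne : g x ≠ 0 := hg x hxI (ne_of_gt hx0)
      exact div_nonneg hf hgd
    obtain ⟨δ, hδ, hmemδ⟩ := small_mem R hR I hI
    have hsub : Ioo (0:ℝ) δ ⊆ I \ {0} := fun y hy =>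
      ⟨hmemδ y (by rw [abs_of_pos hy.1]; exact hy.2) (Or.inl hy.1), ne_of_gt hy.1⟩
    have hle : 𝓝[>] (0:ℝ) ≤ nhdsWithin 0 (I \ {0}) :=
      le_trans (nhdsWithin_le_of_mem (Ioo_mem_nhdsGT_of_mem ⟨le_refl 0, hδ⟩))
        (nhdsWithin_mono _ hsub)
    have hc' : Tendsto (fun x => f x / g x) (𝓝[>] (0:ℝ)) (nhds c) := hc.mono_left hle
    have hc0 : 0 ≤ c := by
      refine ge_of_tendsto hc' ?_
      filter_upwards [Ioo_mem_nhdsGT_of_mem (⟨le_refl (0:ℝ), hδ⟩ : (0:ℝ) ∈ Ico 0 δ)] with x hx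
      exact hpos x (hsub hx).1 hx.1
    refine ⟨hc0, ?_⟩
    intro A hA hAr hAI
    have hsA := psd_symm hA
    obtain ⟨Aε, hev, hT⟩ := key R hR I hI f g c hc A hA hAr hAI
    refine posSemidef_of_tendsto (map_isHermitian A hsA _) ?_ hT
    filter_upwards [hev] with ε hε
    obtain ⟨hps, hr1, hmem, hnz⟩ := hε
    have hgP := hgp (Aε ε) hps hr1 hmem
    have hfP := hfp (Aε ε) hps hr1 hmem
    set B := (Aε ε).map g with hBdef
    have hBnz : ∀ i j, B i j ≠ 0 := fun i j => hg _ (hmem i j) (hnz i j)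
    have hsB : ∀ i j, B i j = B j i := fun i j => psd_symm hgP.1 i j
    set p : Fin n := ⟨0, hnpos⟩ with hpdef
    have hp : B p p ≠ 0 := hBnz p p
    have hpp : 0 < B p p := lt_of_le_of_ne (psd_diag_nonneg hgP.1 p) (Ne.symm hp)
    have hq := sym_rank_one_struct B hsB hgP.2 p hp
    set w : Fin n → ℝ := fun i => Real.sqrt (B p p) * (B p i)⁻¹ with hw
    have hsq : Real.sqrt (B p p) * Real.sqrt (B p p) = B p p := Real.mul_self_sqrt hpp.le
    have hrepr : (Aε ε).map (fun x => if x = 0 then c else f x / g x) =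
        Matrix.diagonal w * ((Aε ε).map f) * Matrix.diagonal w := by
      ext i j
      rw [diag_conj_apply]
      simp only [Matrix.map_apply]
      rw [if_neg (hnz i j)]
      have hBij : g (Aε ε i j) = B p i * B p j / B p p := by
        rw [show g (Aε ε i j) = B i j from rfl]
        exact hq i j
      rw [hBij]
      simp only [hw]
      rw [show Real.sqrt (B p p) * (B p i)⁻¹ * f (Aε ε i j) *
          (Real.sqrt (B p p) * (B p j)⁻¹) =
          (Real.sqrt (B p p) * Real.sqrt (B p p)) * f (Aε ε i j) *
            ((B p i)⁻¹ * (B p j)⁻¹) from by ring, hsq]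
      field_simp
    rw [hrepr]
    exact posSemidef_diag_conj hfP w
end

section
/- Let α ∈ (0,∞) be a real number and n ≥ 2 an integer. For u ∈ ℝ^n, let A_u := 1_{n×n} + u uᵀ. Then the following are equivalent: (1) there exists u ∈ (−1,1)^n such that the matrix ((1 + u_i u_j)^α)_{i,j=1}^n (the entrywise α-th power of A_u) is nonsingular; (2) either α is a positive integer with α ≥ n−1, or α is not an integer. -/
open Matrix Set

private lemma pos_of_between {b p q y : ℝ} (hp : 0 < 1 + b * p) (hq : 0 < 1 + b * q)
    (h1 : p ≤ y) (h2 : y ≤ q) : 0 < 1 + b * y := by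
  rcases le_total 0 b with hb | hb
  · nlinarith
  · nlinarith

/-- Key linear-independence lemma: if `β` avoids `{0,1,...,m-2}`, the functions
`t ↦ (1 + bⱼ t)^β` with distinct `bⱼ` cannot vanish simultaneously at `m` distinct
points (in the positivity region) with nontrivial coefficients. -/
private lemma key_indep : ∀ (m : ℕ) (β : ℝ) (b x : Fin m → ℝ), Function.Injective b →
    Function.Injective x → (∀ k : ℕ, k + 1 < m → β ≠ (k : ℝ)) →
    (∀ i j, 0 < 1 + b j * x i) → ∀ c : Fin m → ℝ,
    (∀ i, ∑ j, c j * (1 + b j * x i) ^ β = 0) → c = 0 := by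
  intro m
  induction m with
  | zero =>
    intro β b x _ _ _ _ c _
    funext i; exact i.elim0
  | succ m ih =>
    intro β b x hb hx hβ hpos c hzero
    set ℓ : Fin (m + 1) := Fin.last m with hℓ
    have hd : ∀ i, (1 : ℝ) + b ℓ * x i ≠ 0 := fun i => ne_of_gt (hpos i ℓ)
    set y : Fin (m + 1) → ℝ := fun i => x i / (1 + b ℓ * x i) with hy
    have factA : ∀ i j, 1 + (b j - b ℓ) * y i = (1 + b j * x i) / (1 + b ℓ * x i) := by
      intro i j
      have hdi : (1:ℝ) + b ℓ * x i ≠ 0 := hd i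
      rw [hy]
      field_simp
      ring
    have hyinj : Function.Injective y := by
      intro i i' h
      apply hx
      rw [hy] at h
      simp only [div_eq_div_iff (hd i) (hd i')] at h
      nlinarith [h]
    have hyT : ∀ i j, 0 < 1 + (b j - b ℓ) * y i := by
      intro i j
      rw [factA i j]
      exact div_pos (hpos i j) (hpos i ℓ)
    set G : ℝ → ℝ := fun t => ∑ j, c j * (1 + (b j - b ℓ) * t) ^ β with hG
    have hGy : ∀ i, G (y i) = 0 := by
      intro i
      have : G (y i) = (∑ j, c j * (1 + b j * x i) ^ β) / (1 + b ℓ * x i) ^ β := by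
        rw [hG]
        simp only [Finset.sum_div]
        refine Finset.sum_congr rfl fun j _ => ?_
        rw [factA i j, Real.div_rpow (le_of_lt (hpos i j)) (le_of_lt (hpos i ℓ)),
          mul_div_assoc]
      rw [this, hzero i, zero_div]
    -- sort the points y
    set σ := Tuple.sort y with hσ
    set z : Fin (m + 1) → ℝ := y ∘ σ with hz
    have hzmono : Monotone z := Tuple.monotone_sort y
    have hzsm : StrictMono z := hzmono.strictMono_of_injective (hyinj.comp σ.injective)
    -- Rolle step
    have hstep : ∀ i : Fin m, ∃ t, z (Fin.castSucc i) < t ∧ t < z (Fin.succ i) ∧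
        ∑ j : Fin (m + 1), (c j * ((b j - b ℓ) * β)) * (1 + (b j - b ℓ) * t) ^ (β - 1) = 0 := by
      intro i
      have hpq : z (Fin.castSucc i) < z (Fin.succ i) := hzsm Fin.castSucc_lt_succ
      have posIcc : ∀ t ∈ Icc (z (Fin.castSucc i)) (z (Fin.succ i)), ∀ j,
          0 < 1 + (b j - b ℓ) * t := by
        intro t ht j
        exact pos_of_between (hyT (σ (Fin.castSucc i)) j) (hyT (σ (Fin.succ i)) j) ht.1 ht.2
      have hcont : ContinuousOn G (Icc (z (Fin.castSucc i)) (z (Fin.succ i))) := by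
        rw [hG]
        apply continuousOn_finset_sum
        intro j _
        apply ContinuousOn.mul continuousOn_const
        apply ContinuousOn.rpow_const
        · exact (continuousOn_const.add (continuousOn_const.mul continuousOn_id))
        · intro t ht
          exact Or.inl (ne_of_gt (posIcc t ht j))
      have hderiv : ∀ t ∈ Ioo (z (Fin.castSucc i)) (z (Fin.succ i)),
          HasDerivAt G (∑ j, c j * ((b j - b ℓ) * β *
            (1 + (b j - b ℓ) * t) ^ (β - 1))) t := by
        intro t ht
        rw [hG]
        apply HasDerivAt.fun_sum
        intro j _
        have h1 : HasDerivAt (fun s => 1 + (b j - b ℓ) * s) (b j - b ℓ) t := by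
          simpa using ((hasDerivAt_id t).const_mul (b j - b ℓ)).const_add 1
        have h2 := h1.rpow_const (p := β)
          (Or.inl (ne_of_gt (posIcc t (Set.mem_Icc_of_Ioo ht) j)))
        simpa [mul_comm, mul_assoc, mul_left_comm] using h2.const_mul (c j)
      obtain ⟨t, htmem, htzero⟩ := exists_hasDerivAt_eq_zero hpq hcont
        (by simp only [hz, Function.comp_apply, hGy]) hderiv
      refine ⟨t, htmem.1, htmem.2, ?_⟩
      rw [← htzero]
      refine Finset.sum_congr rfl fun j _ => ?_
      ring
    choose η hη1 hη2 hη3 using hstep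
    have hηmono : StrictMono η := by
      intro i i' hii'
      calc η i < z (Fin.succ i) := hη2 i
        _ ≤ z (Fin.castSucc i') := by
            apply hzmono
            rw [Fin.le_def]
            simp only [Fin.val_succ, Fin.coe_castSucc]
            exact hii'
        _ < η i' := hη1 i'
    -- apply induction hypothesis
    have hb' : Function.Injective (fun j : Fin m => b (Fin.castSucc j) - b ℓ) := by
      intro j j' h
      simp only [sub_left_inj] at h
      exact Fin.castSucc_injective m (hb h)
    have hβ' : ∀ k : ℕ, k + 1 < m → β - 1 ≠ (k : ℝ) := by
      intro k hk h
      have := hβ (k + 1) (by omega)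
      apply this
      push_cast
      linarith
    have hpos' : ∀ i j : Fin m, 0 < 1 + (b (Fin.castSucc j) - b ℓ) * η i := by
      intro i j
      exact pos_of_between (hyT (σ (Fin.castSucc i)) (Fin.castSucc j))
        (hyT (σ (Fin.succ i)) (Fin.castSucc j)) (le_of_lt (hη1 i)) (le_of_lt (hη2 i))
    have hzero' : ∀ i : Fin m, ∑ j : Fin m,
        (c (Fin.castSucc j) * ((b (Fin.castSucc j) - b ℓ) * β)) *
          (1 + (b (Fin.castSucc j) - b ℓ) * η i) ^ (β - 1) = 0 := by
      intro i
      have := hη3 i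
      rw [Fin.sum_univ_castSucc] at this
      simpa [hℓ] using this
    have hc' := ih (β - 1) (fun j => b (Fin.castSucc j) - b ℓ) η hb' hηmono.injective hβ'
      hpos' (fun j => c (Fin.castSucc j) * ((b (Fin.castSucc j) - b ℓ) * β)) hzero'
    have hcns : ∀ j : Fin m, c (Fin.castSucc j) = 0 := by
      intro j
      have h0 := congrFun hc' j
      simp only [Pi.zero_apply] at h0
      have hβ0 : β ≠ 0 := by
        have := hβ 0 (by have := j.pos; omega)
        simpa using this
      have hbne : b (Fin.castSucc j) - b ℓ ≠ 0 := by
        refine sub_ne_zero.mpr fun h => ?_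
        have := hb h
        exact absurd this (Fin.ne_of_lt (Fin.castSucc_lt_last j))
      rcases mul_eq_zero.mp h0 with h | h
      · exact h
      · exact absurd h (mul_ne_zero hbne hβ0)
    funext k
    simp only [Pi.zero_apply]
    induction k using Fin.lastCases with
    | cast j => exact hcns j
    | last =>
      have h0 := hzero 0
      rw [Fin.sum_univ_castSucc] at h0
      have : ∀ j : Fin m, c (Fin.castSucc j) * (1 + b (Fin.castSucc j) * x 0) ^ β = 0 := by
        intro j; rw [hcns j, zero_mul]
      rw [Finset.sum_congr rfl (fun j _ => this j), Finset.sum_const, smul_zero, zero_add] at h0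
      have hpow : (0:ℝ) < (1 + b (Fin.last m) * x 0) ^ β :=
        Real.rpow_pos_of_pos (hpos 0 (Fin.last m)) β
      rcases mul_eq_zero.mp h0 with h | h
      · exact h
      · exact absurd h (ne_of_gt hpow)

/-- Let `α > 0` and `n ≥ 2`.  There exists `u ∈ (-1,1)ⁿ` such that the entrywise `α`-th
power of `1_{n×n} + uuᵀ`, i.e. the matrix `((1 + uᵢuⱼ)^α)`, is nonsingular, iff either
`α` is a positive integer with `α ≥ n-1`, or `α` is not an integer. -/
theorem entrywise_power_nonsingular_iff
    (α : ℝ) (hα : 0 < α) (n : ℕ) (hn : 2 ≤ n) :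
    (∃ u : Fin n → ℝ, (∀ i, u i ∈ Set.Ioo (-1 : ℝ) 1) ∧
      (Matrix.of fun i j => (1 + u i * u j) ^ α).det ≠ 0) ↔
    ((∃ m : ℕ, (m : ℝ) = α ∧ n - 1 ≤ m) ∨ (∀ m : ℕ, (m : ℝ) ≠ α)) := by
  constructor
  · rintro ⟨u, hu, hdet⟩
    by_contra hrhs
    push_neg at hrhs
    obtain ⟨h1, m, hm⟩ := hrhs
    have hmn : m < n - 1 := h1 m hm
    have hm1 : 1 ≤ m := by
      by_contra h
      push_neg at h
      interval_cases m
      simp at hm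
      rw [← hm] at hα
      exact lt_irrefl _ hα
    -- the matrix factors through rank m+1 < n
    apply hdet
    set M : Matrix (Fin n) (Fin n) ℝ := Matrix.of fun i j => (1 + u i * u j) ^ α with hM
    set B : Matrix (Fin n) (Fin (m + 1)) ℝ :=
      Matrix.of fun i k => u i ^ (k : ℕ) * (m.choose k) with hB
    set C : Matrix (Fin (m + 1)) (Fin n) ℝ := Matrix.of fun k j => u j ^ (k : ℕ) with hC
    have hfact : M = B * C := by
      ext i j
      rw [hM, hB, hC]
      simp only [Matrix.mul_apply, Matrix.of_apply]
      rw [← hm, Real.rpow_natCast]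
      rw [show (1 : ℝ) + u i * u j = u i * u j + 1 by ring, add_pow]
      rw [← Fin.sum_univ_eq_sum_range (fun k => (u i * u j) ^ k * 1 ^ (m - k) * (m.choose k : ℝ))]
      refine Finset.sum_congr rfl fun k _ => ?_
      ring
    by_contra hdetne
    have hunit : IsUnit M := by
      rw [Matrix.isUnit_iff_isUnit_det]
      exact isUnit_iff_ne_zero.mpr hdetne
    have hrank : M.rank = n := by
      rw [Matrix.rank_of_isUnit M hunit, Fintype.card_fin]
    have hle : M.rank ≤ m + 1 := by
      rw [hfact]
      calc (B * C).rank ≤ B.rank := Matrix.rank_mul_le_left B C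
        _ ≤ Fintype.card (Fin (m + 1)) := Matrix.rank_le_card_width B
        _ = m + 1 := Fintype.card_fin _
    omega
  · intro h
    set u : Fin n → ℝ := fun i => ((i : ℕ) + 1) / (2 * n) with hu
    have hn0 : (0:ℝ) < 2 * n := by positivity
    have hupos : ∀ i, 0 < u i := by
      intro i
      apply div_pos _ hn0
      positivity
    have hult : ∀ i, u i < 1 := by
      intro i
      rw [hu, div_lt_one hn0]
      have h2 : ((i : ℕ) : ℝ) + 1 ≤ (n : ℝ) := by exact_mod_cast Nat.succ_le_of_lt i.isLt
      have h3 : (1 : ℝ) ≤ (n : ℝ) := by exact_mod_cast (by omega : 1 ≤ n)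
      linarith
    have huinj : Function.Injective u := by
      intro i j hij
      have h2 := (div_eq_div_iff hn0.ne' hn0.ne').mp hij
      have h1 : ((i:ℕ):ℝ) + 1 = ((j:ℕ):ℝ) + 1 := mul_right_cancel₀ hn0.ne' h2
      have h4 : (i:ℕ) = (j:ℕ) := by exact_mod_cast add_right_cancel h1
      exact Fin.ext h4
    refine ⟨u, fun i => ⟨by linarith [hupos i], hult i⟩, ?_⟩
    intro hdet0
    obtain ⟨v, hv0, hMv⟩ := Matrix.exists_mulVec_eq_zero_iff.mpr hdet0
    have hβcond : ∀ k : ℕ, k + 1 < n → α ≠ (k : ℝ) := by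
      intro k hk
      rcases h with ⟨m, hm, hnm⟩ | hnint
      · intro heq
        rw [← hm] at heq
        have : m = k := by exact_mod_cast heq
        omega
      · exact fun heq => hnint k heq.symm
    have hposuu : ∀ i j : Fin n, 0 < 1 + u j * u i := by
      intro i j
      have := hupos i
      have := hupos j
      nlinarith
    have hzero : ∀ i, ∑ j, v j * (1 + u j * u i) ^ α = 0 := by
      intro i
      have := congrFun hMv i
      simp only [Matrix.mulVec, dotProduct, Matrix.of_apply, Pi.zero_apply] at this
      rw [← this]
      refine Finset.sum_congr rfl fun j _ => ?_
      rw [mul_comm (u j) (u i), mul_comm]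
    exact hv0 (key_indep n α u u huinj huinj hβcond hposuu v hzero)
end

section
/- Let 0 < R ≤ ∞, let I = [0,R) or I = (-R,R), and let f : I → ℝ with f not identically zero on I. Fix integers n ≥ 3 and 1 ≤ k < l ≤ n, and assume additionally that k < n−1 in the case I = (-R,R). Then the following are equivalent: (1) f[A] ∈ S_n^k for every n×n real symmetric matrix A of rank at most l with entries in I; (2) f[A] ∈ S_n^k for every A ∈ P_n^l(I); (3) f ≡ c on I for some nonzero constant c. Moreover, f[A] ∈ P_n^k for every A ∈ P_n^l(I) if and only if f ≡ c on I for some constant c > 0. -/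
open Matrix Set

lemma sum_ite_mul' {ι : Type*} [Fintype ι] [DecidableEq ι] (t : ι) (P : Prop) [Decidable P]
    (d : ℝ) (v : ι → ℝ) :
    ∑ β, (if β = t ∧ P then d else 0) * v β = (if P then d else 0) * v t := by
  by_cases hP : P
  · simp only [hP, and_true, ite_mul, zero_mul, if_true]
    rw [Finset.sum_ite_eq' Finset.univ t (fun β => d * v β)]
    simp
  · simp [hP]

lemma sum_ind {k : ℕ} (i j : ℕ) (p : ℝ) :
    ∑ t : Fin k, (if i = ↑t then p else 0) * (if j = ↑t then p else 0)
      = if i = j ∧ i < k then p * p else 0 := by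
  by_cases h : i = j ∧ i < k
  · rw [if_pos h]
    rw [Finset.sum_eq_single_of_mem (⟨i, h.2⟩ : Fin k) (Finset.mem_univ _)]
    · rw [if_pos (by simp), if_pos (by simp; omega)]
    · intro b _ hb
      rcases eq_or_ne i (b : ℕ) with hib | hib
      · exfalso; apply hb; exact Fin.ext (by simpa using hib.symm)
      · rw [if_neg hib, zero_mul]
  · rw [if_neg h]
    apply Finset.sum_eq_zero
    intro t _
    by_cases h1 : i = ↑t
    · by_cases h2 : j = ↑t
      · exfalso; apply h; constructor
        · omega
        · have := t.isLt; omega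
      · rw [if_neg h2, mul_zero]
    · rw [if_neg h1, zero_mul]

lemma sum_pair {m : ℕ} (i j : ℕ) (p : ℝ) :
    ∑ c : Fin m, (if i = 2*↑c then p else if i = 2*↑c+1 then -p else 0)
      * (if j = 2*↑c then p else if j = 2*↑c+1 then -p else 0)
      = if i < 2*m ∧ j < 2*m ∧ i/2 = j/2 then (if i = j then p*p else -(p*p)) else 0 := by
  by_cases h : i < 2*m ∧ j < 2*m ∧ i/2 = j/2
  · rw [if_pos h]
    rw [Finset.sum_eq_single_of_mem (⟨i/2, by omega⟩ : Fin m) (Finset.mem_univ _)]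
    · simp only [Fin.val_mk]
      split_ifs <;> (first | ring1 | (exfalso; omega))
    · intro b _ hb
      have hbv : (b : ℕ) ≠ i/2 := fun hc => hb (Fin.ext (by simpa using hc))
      have h1 : i ≠ 2*↑b := by omega
      have h2 : i ≠ 2*↑b+1 := by omega
      rw [if_neg h1, if_neg h2, zero_mul]
  · rw [if_neg h]
    apply Finset.sum_eq_zero
    intro t _
    have ht := t.isLt
    split_ifs <;> (first | ring1 | (exfalso; omega))

lemma card_le_rank {n : ℕ} {ι : Type} [Fintype ι] [DecidableEq ι]
    (M : Matrix (Fin n) (Fin n) ℝ) (g : ι → Fin n)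
    (h : ∀ v : ι → ℝ, (∀ α, ∑ β, M (g α) (g β) * v β = 0) → v = 0) :
    Fintype.card ι ≤ M.rank := by
  classical
  set F : ι → (Fin n → ℝ) := fun β i => M i (g β) with hF
  have hind : LinearIndependent ℝ F := by
    rw [Fintype.linearIndependent_iff]
    intro c hc
    have hz : c = 0 := by
      apply h
      intro α
      have := congrFun hc (g α)
      simpa [F, Finset.sum_apply, mul_comm] using this
    intro β; rw [hz]; rfl
  have hsub : Submodule.span ℝ (Set.range F) ≤ LinearMap.range M.mulVecLin := by
    rw [Submodule.span_le]; rintro _ ⟨β, rfl⟩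
    refine ⟨Pi.single (g β) 1, ?_⟩
    ext i
    simp [F, Matrix.mulVecLin_apply, Matrix.mulVec_single]
  calc Fintype.card ι = Module.finrank ℝ (Submodule.span ℝ (Set.range F)) :=
        (finrank_span_eq_card hind).symm
    _ ≤ Module.finrank ℝ (LinearMap.range M.mulVecLin) := Submodule.finrank_mono hsub
    _ = M.rank := rfl


lemma const_rank_le_one {n : ℕ} (c : ℝ) : (Matrix.of fun (_ _ : Fin n) => c).rank ≤ 1 := by
  have hfac : (Matrix.of fun (_ _ : Fin n) => c) =
      (Matrix.of fun (_ : Fin n) (_ : Fin 1) => c) *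
        (Matrix.of fun (_ : Fin 1) (_ : Fin n) => (1:ℝ)) := by
    ext i j; simp [Matrix.mul_apply]
  rw [hfac]
  exact le_trans (Matrix.rank_mul_le_right _ _)
    (le_trans (Matrix.rank_le_card_height _) (by simp))

lemma const_psd {n : ℕ} {c : ℝ} (hc : 0 ≤ c) :
    (Matrix.of fun (_ _ : Fin n) => c).PosSemidef := by
  have hfac : (Matrix.of fun (_ _ : Fin n) => c) =
      (Matrix.of fun (_ : Fin n) (_ : Fin 1) => Real.sqrt c) *
        (Matrix.of fun (_ : Fin n) (_ : Fin 1) => Real.sqrt c)ᴴ := by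
    ext i j
    simp [Matrix.mul_apply, Matrix.conjTranspose_apply, Real.mul_self_sqrt hc]
  rw [hfac]; exact Matrix.posSemidef_self_mul_conjTranspose _

lemma psd_isSymm {n : ℕ} {A : Matrix (Fin n) (Fin n) ℝ} (h : A.PosSemidef) : A.IsSymm := by
  have h1 : Aᴴ = A := h.isHermitian
  show Aᵀ = A
  rw [← Matrix.conjTranspose_eq_transpose_of_trivial]
  exact h1

lemma symm_const {n : ℕ} (c : ℝ) : (Matrix.of fun (_ _ : Fin n) => c).IsSymm := by
  show _ᵀ = _
  ext i j
  rfl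

lemma psd_entry_nonneg {n : ℕ} {M : Matrix (Fin n) (Fin n) ℝ} (h : M.PosSemidef) (i : Fin n) :
    0 ≤ M i i := by
  have h2 := h.diag_nonneg (i := i)
  simpa [dotProduct, Matrix.mulVec, Pi.single_apply] using h2

lemma stepC1 {n k l : ℕ} {f : ℝ → ℝ} {I : Set ℝ} (hk : 1 ≤ k) (hkl : k < l) (hln : l ≤ n)
    (H : ∀ A : Matrix (Fin n) (Fin n) ℝ, A.PosSemidef → A.rank ≤ l → (∀ i j, A i j ∈ I) →
      (A.map f).rank ≤ k)
    {a b : ℝ} (ha : a ∈ I) (hb : b ∈ I) (hb0 : 0 ≤ b) (hba : b ≤ a) (hfb : f b ≠ 0) :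
    f a = f b := by
  by_contra hne
  have hkn : k ≤ n := by omega
  have hkn' : k < n := by omega
  set p := Real.sqrt (a - b) with hp
  set q := Real.sqrt b with hq
  set B : Matrix (Fin n) (Fin k ⊕ Unit) ℝ := Matrix.of (fun i t =>
    Sum.elim (fun (u : Fin k) => if (i:ℕ) = ↑u then p else 0) (fun _ => q) t) with hB
  set A := B * Bᴴ with hAdef
  have hA : ∀ i j, A i j = (if (i:ℕ) = (j:ℕ) ∧ (i:ℕ) < k then a - b else 0) + b := by
    intro i j
    rw [hAdef, Matrix.mul_apply]
    simp only [Matrix.conjTranspose_apply, star_trivial, hB, Matrix.of_apply]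
    rw [Fintype.sum_sum_type]
    simp only [Sum.elim_inl, Sum.elim_inr]
    rw [sum_ind i j p]
    have h1 : p * p = a - b := Real.mul_self_sqrt (by linarith)
    have h2 : q * q = b := Real.mul_self_sqrt hb0
    simp [h1, h2]
  have hmem : ∀ i j, A i j ∈ I := by
    intro i j; rw [hA]; split_ifs with h
    · rw [sub_add_cancel]; exact ha
    · rw [zero_add]; exact hb
  have hpsd : A.PosSemidef := Matrix.posSemidef_self_mul_conjTranspose B
  have hrank : A.rank ≤ l := by
    refine le_trans (Matrix.rank_mul_le_right _ _) (le_trans (Matrix.rank_le_card_height _) ?_)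
    simp [Fintype.card_sum]; omega
  have hY := H A hpsd hrank hmem
  set g : (Fin k ⊕ Unit) → Fin n :=
    Sum.elim (fun u => Fin.castLE hkn u) (fun _ => ⟨k, hkn'⟩) with hg
  have hM : ∀ α β, (A.map f) (g α) (g β)
      = f b + (if β = α ∧ α.isLeft = true then f a - f b else 0) := by
    intro α β
    rcases α with u | _ <;> rcases β with w | _ <;>
      simp only [Matrix.map_apply, hg, Sum.elim_inl, Sum.elim_inr, hA, Fin.coe_castLE]
    · by_cases huw : u = w
      · subst huw
        rw [if_pos ⟨rfl, u.isLt⟩]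
        simp [sub_add_cancel]
      · rw [if_neg (by simp [Fin.val_eq_val, huw])]
        rw [if_neg (by rintro ⟨h1, -⟩; exact huw (Sum.inl.inj h1).symm)]
        simp
    · rw [if_neg (fun h => by have := u.isLt; omega)]
      rw [if_neg (by rintro ⟨h1, -⟩; exact Sum.inr_ne_inl h1)]
      simp
    · rw [if_neg (fun h => by have := w.isLt; omega)]
      rw [if_neg (by rintro ⟨h1, -⟩; exact Sum.inl_ne_inr h1)]
      simp
    · rw [if_neg (by omega)]
      rw [if_neg (by rintro ⟨-, h2⟩; simp at h2)]
      simp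
  have hker : ∀ v : (Fin k ⊕ Unit) → ℝ,
      (∀ α, ∑ β, (A.map f) (g α) (g β) * v β = 0) → v = 0 := by
    intro v hv
    have hexp : ∀ α, f b * (∑ β, v β) + (if α.isLeft = true then f a - f b else 0) * v α = 0 := by
      intro α
      have := hv α
      rw [Finset.sum_congr rfl (fun β _ => by rw [hM α β])] at this
      rw [Finset.sum_congr rfl (fun β _ => by
        show (f b + (if β = α ∧ α.isLeft = true then f a - f b else 0)) * v β
          = f b * v β + (if β = α ∧ α.isLeft = true then f a - f b else 0) * v β
        ring), Finset.sum_add_distrib, ← Finset.mul_sum,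
        sum_ite_mul' α (α.isLeft = true) (f a - f b) v] at this
      exact this
    have hS : (∑ β, v β) = 0 := by
      have h0 := hexp (Sum.inr ())
      rw [if_neg (by simp), zero_mul, add_zero] at h0
      exact (mul_eq_zero.mp h0).resolve_left hfb
    have hvl : ∀ u : Fin k, v (Sum.inl u) = 0 := by
      intro u
      have := hexp (Sum.inl u)
      rw [hS, mul_zero, zero_add] at this
      simp only [Sum.isLeft_inl, if_pos rfl] at this
      rcases mul_eq_zero.mp this with h | h
      · exact absurd (sub_eq_zero.mp h) hne
      · exact h
    have hvr : v (Sum.inr ()) = 0 := by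
      rw [Fintype.sum_sum_type] at hS
      simpa [hvl] using hS
    funext α
    rcases α with u | u
    · exact hvl u
    · cases u; exact hvr
  have hcard := card_le_rank (A.map f) g hker
  simp [Fintype.card_sum] at hcard
  omega

lemma stepC2 {n k l : ℕ} {f : ℝ → ℝ} {I : Set ℝ} (hk : 1 ≤ k) (hkl : k < l) (hln : l ≤ n)
    (H : ∀ A : Matrix (Fin n) (Fin n) ℝ, A.PosSemidef → A.rank ≤ l → (∀ i j, A i j ∈ I) →
      (A.map f).rank ≤ k)
    (h0I : (0:ℝ) ∈ I) (hf0 : f 0 = 0) {a : ℝ} (ha : a ∈ I) (ha0 : 0 ≤ a) : f a = 0 := by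
  by_contra hfa
  have hkn : k + 1 ≤ n := by omega
  set p := Real.sqrt a with hp
  set B : Matrix (Fin n) (Fin (k+1)) ℝ :=
    Matrix.of (fun i t => if (i:ℕ) = ↑t then p else 0) with hB
  set A := B * Bᴴ with hAdef
  have hA : ∀ i j, A i j = if (i:ℕ) = (j:ℕ) ∧ (i:ℕ) < k+1 then a else 0 := by
    intro i j
    rw [hAdef, Matrix.mul_apply]
    simp only [Matrix.conjTranspose_apply, star_trivial, hB, Matrix.of_apply]
    rw [sum_ind i j p, Real.mul_self_sqrt ha0]
  have hmem : ∀ i j, A i j ∈ I := by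
    intro i j; rw [hA]; split_ifs with h
    · exact ha
    · exact h0I
  have hpsd : A.PosSemidef := Matrix.posSemidef_self_mul_conjTranspose B
  have hrank : A.rank ≤ l := by
    refine le_trans (Matrix.rank_mul_le_right _ _) (le_trans (Matrix.rank_le_card_height _) ?_)
    simp; omega
  have hY := H A hpsd hrank hmem
  set g : Fin (k+1) → Fin n := Fin.castLE hkn with hg
  have hM : ∀ α β : Fin (k+1), (A.map f) (g α) (g β) = if β = α then f a else 0 := by
    intro α β
    rw [Matrix.map_apply, hA]
    by_cases hab : α = β
    · subst hab
      rw [if_pos ⟨rfl, by simpa [hg] using α.isLt⟩, if_pos rfl]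
    · rw [if_neg (fun hcon => hab (Fin.ext (by simpa [hg] using hcon.1))),
        if_neg (fun hc => hab hc.symm)]
      exact hf0
  have hker : ∀ v : Fin (k+1) → ℝ,
      (∀ α, ∑ β, (A.map f) (g α) (g β) * v β = 0) → v = 0 := by
    intro v hv
    funext α
    have := hv α
    rw [Finset.sum_congr rfl (fun β _ => by rw [hM α β])] at this
    simp only [ite_mul, zero_mul] at this
    rw [Finset.sum_ite_eq' Finset.univ α (fun β => f a * v β)] at this
    simp at this
    rcases this with h | h
    · exact absurd h hfa
    · exact h
  have hcard := card_le_rank (A.map f) g hker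
  simp at hcard
  omega

lemma stepC3 {n k l : ℕ} {f : ℝ → ℝ} {I : Set ℝ} (hk : 1 ≤ k) (hkl : k < l) (hln : l ≤ n)
    (hk2 : k + 2 ≤ n)
    (H : ∀ A : Matrix (Fin n) (Fin n) ℝ, A.PosSemidef → A.rank ≤ l → (∀ i j, A i j ∈ I) →
      (A.map f).rank ≤ k)
    (h0I : (0:ℝ) ∈ I) (hall : ∀ a ∈ I, 0 ≤ a → f a = 0)
    {x : ℝ} (hxI : x ∈ I) (hxneg : x < 0) (hxa : -x ∈ I) : f x = 0 := by
  by_contra hfx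
  set m := (k+2)/2 with hm
  have hm1 : 1 ≤ m := by omega
  have h2m : 2*m ≤ n := by omega
  have hkm : k+1 ≤ 2*m := by omega
  have hml : m ≤ l := by omega
  set p := Real.sqrt (-x) with hp
  set B : Matrix (Fin n) (Fin m) ℝ :=
    Matrix.of (fun i c => if (i:ℕ) = 2*↑c then p else if (i:ℕ) = 2*↑c+1 then -p else 0) with hB
  set A := B * Bᴴ with hAdef
  have hA : ∀ i j, A i j = if (i:ℕ) < 2*m ∧ (j:ℕ) < 2*m ∧ (i:ℕ)/2 = (j:ℕ)/2 then
      (if (i:ℕ) = (j:ℕ) then -x else x) else 0 := by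
    intro i j
    rw [hAdef, Matrix.mul_apply]
    simp only [Matrix.conjTranspose_apply, star_trivial, hB, Matrix.of_apply]
    rw [sum_pair i j p, Real.mul_self_sqrt (by linarith), neg_neg]
  have hmem : ∀ i j, A i j ∈ I := by
    intro i j; rw [hA]; split_ifs
    · exact hxa
    · exact hxI
    · exact h0I
  have hpsd : A.PosSemidef := Matrix.posSemidef_self_mul_conjTranspose B
  have hrank : A.rank ≤ l := by
    refine le_trans (Matrix.rank_mul_le_right _ _) (le_trans (Matrix.rank_le_card_height _) ?_)
    simp; omega
  have hY := H A hpsd hrank hmem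
  set g : Fin m × Bool → Fin n :=
    (fun cs => ⟨2*↑cs.1 + (cond cs.2 1 0), by have := cs.1.isLt; cases cs.2 <;> simp <;> omega⟩)
    with hg
  have hM : ∀ α β, (A.map f) (g α) (g β) = if β = (α.1, !α.2) then f x else 0 := by
    rintro ⟨c1, s1⟩ ⟨c2, s2⟩
    rw [Matrix.map_apply, hA]
    simp only [hg, Fin.val_mk]
    have hc1 := c1.isLt
    have hc2 := c2.isLt
    by_cases hc : (c1 : ℕ) = (c2 : ℕ)
    · have hceq : c1 = c2 := Fin.ext hc
      subst hceq
      cases s1 <;> cases s2 <;> simp only [Bool.cond_true, Bool.cond_false, Bool.not_false,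
        Bool.not_true]
      · rw [if_pos ⟨by omega, by omega, trivial⟩, if_pos trivial, if_neg (by simp)]
        exact hall _ hxa (by linarith)
      · rw [if_pos (by omega), if_neg (by omega), if_pos (by simp)]
      · rw [if_pos (by omega), if_neg (by omega), if_pos (by simp)]
      · rw [if_pos ⟨by omega, by omega, trivial⟩, if_pos trivial, if_neg (by simp)]
        exact hall _ hxa (by linarith)
    · rw [if_neg (by
        rintro ⟨-, -, hdiv⟩
        revert hdiv
        cases s1 <;> cases s2 <;> simp only [Bool.cond_true, Bool.cond_false] <;> omega),
        if_neg (by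
        rintro hceq
        rw [Prod.mk.injEq] at hceq
        exact hc (congrArg Fin.val hceq.1).symm)]
      exact hall 0 h0I le_rfl
  have hker : ∀ v : Fin m × Bool → ℝ,
      (∀ α, ∑ β, (A.map f) (g α) (g β) * v β = 0) → v = 0 := by
    intro v hv
    have key : ∀ α : Fin m × Bool, v (α.1, !α.2) = 0 := by
      intro α
      have := hv α
      rw [Finset.sum_congr rfl (fun β _ => by rw [hM α β])] at this
      simp only [ite_mul, zero_mul] at this
      rw [Finset.sum_ite_eq' Finset.univ (α.1, !α.2) (fun β => f x * v β)] at this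
      simp at this
      rcases this with h | h
      · exact absurd h hfx
      · exact h
    funext cs
    obtain ⟨c, s⟩ := cs
    have := key (c, !s)
    simpa using this
  have hcard := card_le_rank (A.map f) g hker
  simp [Fintype.card_prod] at hcard
  omega

lemma stepC4 {n k l : ℕ} {f : ℝ → ℝ} {I : Set ℝ} (hk : 1 ≤ k) (hkl : k < l) (hln : l ≤ n)
    (hk2 : k + 2 ≤ n)
    (H : ∀ A : Matrix (Fin n) (Fin n) ℝ, A.PosSemidef → A.rank ≤ l → (∀ i j, A i j ∈ I) →
      (A.map f).rank ≤ k)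
    (h0I : (0:ℝ) ∈ I) {c₀ : ℝ} (hc₀ : c₀ ≠ 0) (hpos : ∀ y ∈ I, 0 ≤ y → f y = c₀)
    {x : ℝ} (hxI : x ∈ I) (hxneg : x < 0) (hxa : -x ∈ I) : f x = c₀ := by
  by_contra hne
  set m := (k+1)/2 with hm
  have hm1 : 1 ≤ m := by omega
  have h2m : 2*m + 1 ≤ n := by omega
  have hkm : k + 1 ≤ 2*m + 1 := by omega
  have hml : m ≤ l := by omega
  set p := Real.sqrt (-x) with hp
  set B : Matrix (Fin n) (Fin m) ℝ :=
    Matrix.of (fun i c => if (i:ℕ) = 2*↑c then p else if (i:ℕ) = 2*↑c+1 then -p else 0) with hB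
  set A := B * Bᴴ with hAdef
  have hA : ∀ i j, A i j = if (i:ℕ) < 2*m ∧ (j:ℕ) < 2*m ∧ (i:ℕ)/2 = (j:ℕ)/2 then
      (if (i:ℕ) = (j:ℕ) then -x else x) else 0 := by
    intro i j
    rw [hAdef, Matrix.mul_apply]
    simp only [Matrix.conjTranspose_apply, star_trivial, hB, Matrix.of_apply]
    rw [sum_pair i j p, Real.mul_self_sqrt (by linarith), neg_neg]
  have hmem : ∀ i j, A i j ∈ I := by
    intro i j; rw [hA]; split_ifs
    · exact hxa
    · exact hxI
    · exact h0I
  have hpsd : A.PosSemidef := Matrix.posSemidef_self_mul_conjTranspose B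
  have hrank : A.rank ≤ l := by
    refine le_trans (Matrix.rank_mul_le_right _ _) (le_trans (Matrix.rank_le_card_height _) ?_)
    simp; omega
  have hY := H A hpsd hrank hmem
  set g : Option (Fin m × Bool) → Fin n := (fun o => Option.elim o ⟨2*m, by omega⟩
    (fun cs => ⟨2*↑cs.1 + (cond cs.2 1 0), by have := cs.1.isLt; cases cs.2 <;> simp <;> omega⟩))
    with hg
  set sw : Option (Fin m × Bool) → Option (Fin m × Bool) :=
    (fun o => Option.map (fun cs => (cs.1, !cs.2)) o) with hsw
  have hM : ∀ α β, (A.map f) (g α) (g β)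
      = c₀ + (if β = sw α ∧ α.isSome = true then f x - c₀ else 0) := by
    rintro (_ | ⟨c1, s1⟩) <;> rintro (_ | ⟨c2, s2⟩) <;>
      rw [Matrix.map_apply, hA] <;>
      simp only [hg, hsw, Option.elim, Fin.val_mk, Option.map, Option.isSome]
    · rw [if_neg (by omega), if_neg (by simp)]
      rw [hpos 0 h0I le_rfl]; ring
    · rw [if_neg (by
        rintro ⟨hlt, -, -⟩
        omega), if_neg (by simp)]
      rw [hpos 0 h0I le_rfl]; ring
    · rw [if_neg (by
        rintro ⟨-, hlt, -⟩
        omega), if_neg (by simp)]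
      rw [hpos 0 h0I le_rfl]; ring
    · have hc1 := c1.isLt
      have hc2 := c2.isLt
      by_cases hc : (c1 : ℕ) = (c2 : ℕ)
      · have hceq : c1 = c2 := Fin.ext hc
        subst hceq
        cases s1 <;> cases s2 <;>
          simp only [Bool.cond_true, Bool.cond_false, Bool.not_false, Bool.not_true]
        · rw [if_pos ⟨by omega, by omega, trivial⟩, if_pos trivial, if_neg (by simp)]
          rw [hpos (-x) hxa (by linarith)]; ring
        · rw [if_pos (by omega), if_neg (by omega), if_pos (by simp)]
          ring
        · rw [if_pos (by omega), if_neg (by omega), if_pos (by simp)]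
          ring
        · rw [if_pos ⟨by omega, by omega, trivial⟩, if_pos trivial, if_neg (by simp)]
          rw [hpos (-x) hxa (by linarith)]; ring
      · rw [if_neg (by
          rintro ⟨-, -, hdiv⟩
          revert hdiv
          cases s1 <;> cases s2 <;> simp only [Bool.cond_true, Bool.cond_false] <;> omega),
          if_neg (by
          rintro ⟨hceq, -⟩
          rw [Option.some.injEq, Prod.mk.injEq] at hceq
          exact hc (congrArg Fin.val hceq.1).symm)]
        rw [hpos 0 h0I le_rfl]; ring
  have hker : ∀ v : Option (Fin m × Bool) → ℝ,
      (∀ α, ∑ β, (A.map f) (g α) (g β) * v β = 0) → v = 0 := by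
    intro v hv
    have hexp : ∀ α, c₀ * (∑ β, v β)
        + (if α.isSome = true then f x - c₀ else 0) * v (sw α) = 0 := by
      intro α
      have := hv α
      rw [Finset.sum_congr rfl (fun β _ => by rw [hM α β])] at this
      rw [Finset.sum_congr rfl (fun β _ => by
        show (c₀ + (if β = sw α ∧ α.isSome = true then f x - c₀ else 0)) * v β
          = c₀ * v β + (if β = sw α ∧ α.isSome = true then f x - c₀ else 0) * v β
        ring), Finset.sum_add_distrib, ← Finset.mul_sum,
        sum_ite_mul' (sw α) (α.isSome = true) (f x - c₀) v] at this
      exact this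
    have hS : (∑ β, v β) = 0 := by
      have h0 := hexp none
      rw [if_neg (by simp), zero_mul, add_zero] at h0
      exact (mul_eq_zero.mp h0).resolve_left hc₀
    have hsome : ∀ c s, v (some (c, s)) = 0 := by
      intro c s
      have := hexp (some (c, !s))
      rw [hS, mul_zero, zero_add] at this
      simp only [Option.isSome, if_pos rfl] at this
      rcases mul_eq_zero.mp this with h | h
      · exact absurd (by linarith [sub_eq_zero.mp h] : f x = c₀) hne
      · simpa [hsw, Bool.not_not] using h
    have hnone : v none = 0 := by
      rw [Fintype.sum_option] at hS
      simpa [hsome] using hS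
    funext o
    rcases o with _ | ⟨c, s⟩
    · exact hnone
    · exact hsome c s
  have hcard := card_le_rank (A.map f) g hker
  simp [Fintype.card_option, Fintype.card_prod] at hcard
  omega


/-- **The regime `1 ≤ k < l`.** Let `I = [0,R)` or `(-R,R)` with `0 < R ≤ ∞`, and
`f : I → ℝ` not identically zero on `I`.  Fix `n ≥ 3` and `1 ≤ k < l ≤ n`, with
additionally `k < n-1` when `I = (-R,R)`.  Then the following are equivalent:
(1) `f[A]` is symmetric of rank at most `k` for every symmetric `A` of rank at most `l`
with entries in `I`; (2) the same for every `A ∈ P_n^l(I)`; (3) `f ≡ c` on `I` for some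
`c ≠ 0`.  Moreover `f[-] : P_n^l(I) → P_n^k` iff `f ≡ c` on `I` for some `c > 0`. -/
theorem low_rank_target_forces_constant
    (R : EReal) (hR : 0 < R) (I : Set ℝ)
    (hI : I = {x : ℝ | 0 ≤ x ∧ (x : EReal) < R} ∨
          I = {x : ℝ | -R < (x : EReal) ∧ (x : EReal) < R})
    (f : ℝ → ℝ) (hf : ∃ x ∈ I, f x ≠ 0)
    (n k l : ℕ) (hn : 3 ≤ n) (hk : 1 ≤ k) (hkl : k < l) (hln : l ≤ n)
    (hcase : I = {x : ℝ | -R < (x : EReal) ∧ (x : EReal) < R} → k < n - 1) :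
    ((∀ A : Matrix (Fin n) (Fin n) ℝ, A.IsSymm → A.rank ≤ l → (∀ i j, A i j ∈ I) →
        (A.map f).IsSymm ∧ (A.map f).rank ≤ k) ↔
      (∃ c : ℝ, c ≠ 0 ∧ ∀ x ∈ I, f x = c)) ∧
    ((∀ A : Matrix (Fin n) (Fin n) ℝ, A.PosSemidef → A.rank ≤ l → (∀ i j, A i j ∈ I) →
        (A.map f).IsSymm ∧ (A.map f).rank ≤ k) ↔
      (∃ c : ℝ, c ≠ 0 ∧ ∀ x ∈ I, f x = c)) ∧
    ((∀ A : Matrix (Fin n) (Fin n) ℝ, A.PosSemidef → A.rank ≤ l → (∀ i j, A i j ∈ I) →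
        (A.map f).PosSemidef ∧ (A.map f).rank ≤ k) ↔
      (∃ c : ℝ, 0 < c ∧ ∀ x ∈ I, f x = c)) := by
  have h0I : (0:ℝ) ∈ I := by
    rcases hI with h | h <;> rw [h]
    · exact mem_setOf.mpr ⟨le_rfl, by simpa using hR⟩
    · refine mem_setOf.mpr ⟨?_, by simpa using hR⟩
      have h1 : -(0:EReal) < R := by simpa using hR
      have h2 : -R < (0:EReal) := EReal.neg_lt_comm.mp h1
      simpa using h2
  have map_const : ∀ (c : ℝ), (∀ x ∈ I, f x = c) →
      ∀ A : Matrix (Fin n) (Fin n) ℝ, (∀ i j, A i j ∈ I) →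
      A.map f = Matrix.of fun _ _ => c := by
    intro c hc A hA
    ext i j
    exact hc _ (hA i j)
  -- the key forward implication
  have core : (∀ A : Matrix (Fin n) (Fin n) ℝ, A.PosSemidef → A.rank ≤ l →
      (∀ i j, A i j ∈ I) → (A.map f).rank ≤ k) →
      ∃ c : ℝ, c ≠ 0 ∧ ∀ x ∈ I, f x = c := by
    intro H
    rcases hI with hIl | hIr
    · -- one-sided interval
      have hnonneg : ∀ x ∈ I, 0 ≤ x := by
        intro x hx; rw [hIl] at hx; exact hx.1
      have hf0 : f 0 ≠ 0 := by
        intro h0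
        obtain ⟨x₀, hx₀I, hx₀⟩ := hf
        exact hx₀ (stepC2 hk hkl hln H h0I h0 hx₀I (hnonneg _ hx₀I))
      exact ⟨f 0, hf0, fun x hx => stepC1 hk hkl hln H hx h0I le_rfl (hnonneg _ hx) hf0⟩
    · -- two-sided interval
      have hk2 : k + 2 ≤ n := by have := hcase hIr; omega
      have hneg : ∀ x ∈ I, -x ∈ I := by
        intro x hx
        rw [hIr] at hx ⊢
        obtain ⟨h1, h2⟩ := hx
        constructor
        · rw [EReal.coe_neg]; exact EReal.neg_lt_neg_iff.mpr h2
        · rw [EReal.coe_neg]; exact EReal.neg_lt_comm.mpr h1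
      have hex : ∃ a ∈ I, 0 ≤ a ∧ f a ≠ 0 := by
        by_contra hno
        push_neg at hno
        obtain ⟨x₀, hx₀I, hx₀⟩ := hf
        have hneg0 : x₀ < 0 := by
          by_contra hge
          push_neg at hge
          exact hx₀ (hno x₀ hx₀I hge)
        exact hx₀ (stepC3 hk hkl hln hk2 H h0I hno hx₀I hneg0 (hneg _ hx₀I))
      obtain ⟨a, haI, ha0, hfa⟩ := hex
      have hf0 : f 0 ≠ 0 := fun h0 => hfa (stepC2 hk hkl hln H h0I h0 haI ha0)
      have hposc : ∀ y ∈ I, 0 ≤ y → f y = f 0 :=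
        fun y hy hy0 => stepC1 hk hkl hln H hy h0I le_rfl hy0 hf0
      refine ⟨f 0, hf0, fun x hx => ?_⟩
      rcases le_or_gt 0 x with h | h
      · exact hposc x hx h
      · exact stepC4 hk hkl hln hk2 H h0I hf0 hposc hx h (hneg _ hx)
  -- the backward implication (symmetric version)
  have bwd : ∀ c : ℝ, (∀ x ∈ I, f x = c) →
      ∀ A : Matrix (Fin n) (Fin n) ℝ, (∀ i j, A i j ∈ I) →
      (A.map f).IsSymm ∧ (A.map f).rank ≤ k := by
    intro c hc A hmem
    rw [map_const c hc A hmem]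
    exact ⟨symm_const c, le_trans (const_rank_le_one c) hk⟩
  refine ⟨⟨?_, ?_⟩, ⟨?_, ?_⟩, ⟨?_, ?_⟩⟩
  · intro H1
    exact core fun A hpsd hrk hmem => (H1 A (psd_isSymm hpsd) hrk hmem).2
  · rintro ⟨c, _, hc⟩ A _ _ hmem
    exact bwd c hc A hmem
  · intro H2
    exact core fun A hpsd hrk hmem => (H2 A hpsd hrk hmem).2
  · rintro ⟨c, _, hc⟩ A _ _ hmem
    exact bwd c hc A hmem
  · intro H3
    obtain ⟨c, hc0, hc⟩ := core fun A hpsd hrk hmem => (H3 A hpsd hrk hmem).2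
    refine ⟨c, ?_, hc⟩
    -- show `0 < c` using the zero matrix
    set Z : Matrix (Fin n) (Fin n) ℝ := Matrix.of fun _ _ => (0:ℝ) with hZ
    have hZpsd : Z.PosSemidef := const_psd le_rfl
    have hZrank : Z.rank ≤ l := le_trans (const_rank_le_one 0) (by omega)
    have hZmem : ∀ i j, Z i j ∈ I := fun i j => h0I
    have hmappsd := (H3 Z hZpsd hZrank hZmem).1
    have hZmap : Z.map f = Matrix.of fun _ _ => c := by
      ext i j
      exact hc 0 h0I
    rw [hZmap] at hmappsd
    have := psd_entry_nonneg hmappsd ⟨0, by omega⟩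
    exact lt_of_le_of_ne this (Ne.symm hc0)
  · rintro ⟨c, hcpos, hc⟩ A _ _ hmem
    rw [map_const c hc A hmem]
    exact ⟨const_psd hcpos.le, le_trans (const_rank_le_one c) hk⟩
end
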